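/- arXiv:1802.07823 — 5 statements merged into one kernel-verified Lean document; each statement's English description precedes it below -/
import Mathlib

section
/- Let p ≥ 0 be real, λ > 0 real, γ, σ complex, a complex with Re(a) > 0, ϑ, υ complex with Re(υ) > Re(ϑ) > 0, Re(σ) > 0, and z complex with |z| < 1. Then the extended Hurwitz–Lerch zeta function has the integral representation Φ_{γ,ϑ;υ}(z,σ,a;p,λ) = (1/Γ(σ)) ∫_0^∞ t^{σ−1} e^{−a t} F_p^λ(γ,ϑ;υ; z e^{−t}) dt. -/
open MeasureTheory Set Filter

/-- Mittag-Leffler function `E_λ(z) = ∑ z^n / Γ(λ n + 1)`. -/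
noncomputable def mittagLeffler (lam : ℝ) (z : ℂ) : ℂ :=
  ∑' n : ℕ, z ^ n / (Real.Gamma (lam * n + 1) : ℂ)

/-- Extended beta function `B(x,y;p,λ)`. -/
noncomputable def extBeta (x y : ℂ) (p lam : ℝ) : ℂ :=
  ∫ t in (0:ℝ)..1, (t : ℂ) ^ (x - 1) * ((1 : ℂ) - (t : ℂ)) ^ (y - 1) *
    mittagLeffler lam (-(p : ℂ) / ((t : ℂ) * (1 - (t : ℂ))))

/-- Classical beta function `B(x,y) = B(x,y;0,1)`. -/
noncomputable def classicalBeta (x y : ℂ) : ℂ := extBeta x y 0 1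

/-- Pochhammer symbol `(x)_n = x (x+1) ⋯ (x+n-1)`. -/
noncomputable def poch (x : ℂ) (n : ℕ) : ℂ := (ascPochhammer ℂ n).eval x

/-- Extended Hurwitz–Lerch zeta function `Φ_{γ,ϑ;υ}(z,σ,a;p,λ)`. -/
noncomputable def extHLZeta (γ ϑ υ z σ a : ℂ) (p lam : ℝ) : ℂ :=
  ∑' n : ℕ, poch γ n * extBeta (ϑ + n) (υ - ϑ) p lam /
    (classicalBeta ϑ (υ - ϑ) * (n.factorial : ℂ)) * z ^ n / ((n : ℂ) + a) ^ σ

/-- Extended Gauss hypergeometric function `F_p^λ(γ,ϑ;υ;z)`. -/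
noncomputable def extHyper (γ ϑ υ : ℂ) (p lam : ℝ) (z : ℂ) : ℂ :=
  ∑' n : ℕ, poch γ n * extBeta (ϑ + n) (υ - ϑ) p lam /
    classicalBeta ϑ (υ - ϑ) * z ^ n / (n.factorial : ℂ)

/-- Goyal–Laddha Hurwitz–Lerch zeta function `Φ*_γ(z,σ,a)`. -/
noncomputable def goyalLaddha (γ z σ a : ℂ) : ℂ :=
  ∑' n : ℕ, poch γ n / (n.factorial : ℂ) * z ^ n / ((n : ℂ) + a) ^ σ

/-- Limiting case `Φ*_{ϑ;υ}(z,σ,a;p,λ)`. -/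
noncomputable def limitHLZeta (ϑ υ z σ a : ℂ) (p lam : ℝ) : ℂ :=
  ∑' n : ℕ, extBeta (ϑ + n) (υ - ϑ) p lam /
    (classicalBeta ϑ (υ - ϑ) * (n.factorial : ℂ)) * z ^ n / ((n : ℂ) + a) ^ σ

/-- Garg Hurwitz–Lerch zeta function `Φ_{γ,ϑ;υ}(z,σ,a)`. -/
noncomputable def gargZeta (γ ϑ υ z σ a : ℂ) : ℂ :=
  ∑' n : ℕ, poch γ n * poch ϑ n / (poch υ n * (n.factorial : ℂ)) *
    z ^ n / ((n : ℂ) + a) ^ σ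

section AuxLemmasForHLZeta
open Complex

lemma myIntegrableOn_rpow_exp {c d : ℝ} (hc : -1 < c) (hd : 0 < d) :
    IntegrableOn (fun t : ℝ => t ^ c * Real.exp (-d * t)) (Ioi 0) := by
  have := integrableOn_rpow_mul_exp_neg_mul_rpow hc zero_lt_one hd
  simpa [Real.rpow_one] using this

lemma myCont (s b : ℂ) : ContinuousOn (fun t : ℝ => (t : ℂ) ^ (s - 1) * Complex.exp (-b * t))
    (Ioi 0) := by
  apply ContinuousOn.mul
  · exact (Complex.continuous_ofReal.continuousOn).cpow_const
      (fun t ht => Or.inl (by simpa using ht))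
  · exact (Complex.continuous_exp.comp ((continuous_const.mul Complex.continuous_ofReal))).continuousOn

lemma myNorm {s b : ℂ} {t : ℝ} (ht : 0 < t) :
    ‖(t : ℂ) ^ (s - 1) * Complex.exp (-b * t)‖ = t ^ (s.re - 1) * Real.exp (-b.re * t) := by
  rw [norm_mul, Complex.norm_cpow_eq_rpow_re_of_pos ht,
    Complex.norm_exp]
  norm_num

lemma myIntegrable {s b : ℂ} (hs : 0 < s.re) (hb : 0 < b.re) :
    IntegrableOn (fun t : ℝ => (t : ℂ) ^ (s - 1) * Complex.exp (-b * t)) (Ioi 0) := by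
  apply Integrable.mono' (myIntegrableOn_rpow_exp (show (-1:ℝ) < s.re - 1 by linarith) hb)
  · exact (myCont s b).aestronglyMeasurable measurableSet_Ioi
  · filter_upwards [ae_restrict_mem measurableSet_Ioi] with t ht
    rw [myNorm ht]

lemma myGammaVal {s b : ℂ} (hs : 0 < s.re) (hb : 0 < b.re) :
    ∫ t in Ioi (0:ℝ), (t : ℂ) ^ (s - 1) * Complex.exp (-b * t)
      = Complex.Gamma s * b ^ (-s) := by
  set U : Set ℂ := {z : ℂ | 0 < z.re} with hU
  have hUopen : IsOpen U := isOpen_lt continuous_const Complex.continuous_re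
  have hUconn : IsPreconnected U := (convex_halfSpace_re_gt 0).isPreconnected
  set F : ℂ → ℂ := fun z => ∫ t in Ioi (0:ℝ), (t : ℂ) ^ (s - 1) * Complex.exp (-z * t) with hF
  set G : ℂ → ℂ := fun z => Complex.Gamma s * z ^ (-s) with hG
  have hFdiff : ∀ z ∈ U, DifferentiableAt ℂ F z := by
    intro z hz
    have hzre : 0 < z.re := hz
    have hder := hasDerivAt_integral_of_dominated_loc_of_deriv_le
      (F := fun w (t : ℝ) => (t : ℂ) ^ (s - 1) * Complex.exp (-w * t))
      (F' := fun w (t : ℝ) => (t : ℂ) ^ (s - 1) * (Complex.exp (-w * t) * -(t : ℂ)))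
      (x₀ := z) (s := Metric.ball z (z.re / 2))
      (bound := fun t : ℝ => t ^ s.re * Real.exp (-(z.re / 2) * t))
      (μ := volume.restrict (Ioi 0)) (Metric.ball_mem_nhds z (by positivity))
      ?_ ?_ ?_ ?_ ?_ ?_
    · exact hder.2.differentiableAt
    · filter_upwards with w
      exact ((myCont s w).aestronglyMeasurable measurableSet_Ioi)
    · exact myIntegrable hs hzre
    · apply ContinuousOn.aestronglyMeasurable _ measurableSet_Ioi
      exact ((myCont s z).mul
        ((Complex.continuous_ofReal.continuousOn).neg)).congr
        (fun t _ => by simp only [Pi.neg_apply, Pi.mul_apply]; ring)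
    · filter_upwards [ae_restrict_mem measurableSet_Ioi] with t ht w hw
      rw [Metric.mem_ball] at hw
      have ht0 : (0:ℝ) < t := ht
      have hwre : z.re / 2 ≤ w.re := by
        have h2 : |w.re - z.re| < z.re / 2 := by
          have := lt_of_le_of_lt (Complex.abs_re_le_norm (w - z))
            (by simpa [Complex.dist_eq] using hw)
          simpa [Complex.sub_re] using this
        have := abs_lt.mp h2
        linarith [this.1]
      have hnrm : ‖(t : ℂ) ^ (s - 1) * (Complex.exp (-w * t) * -(t : ℂ))‖
          = t ^ (s.re - 1) * (Real.exp (-w.re * t) * t) := by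
        rw [norm_mul, norm_mul, norm_neg, Complex.norm_cpow_eq_rpow_re_of_pos ht0, Complex.norm_exp,
          Complex.norm_real, Real.norm_of_nonneg ht0.le]
        norm_num
      rw [hnrm]
      have h1 : t ^ (s.re - 1) * (Real.exp (-w.re * t) * t)
          = t ^ s.re * Real.exp (-w.re * t) := by
        rw [show s.re = (s.re - 1) + 1 by ring, Real.rpow_add ht0, Real.rpow_one]
        ring
      rw [h1]
      have hle : Real.exp (-w.re * t) ≤ Real.exp (-(z.re / 2) * t) := by
        apply Real.exp_le_exp.mpr
        nlinarith
      exact mul_le_mul_of_nonneg_left hle (Real.rpow_nonneg ht0.le _)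
    · exact myIntegrableOn_rpow_exp (by linarith) (by positivity)
    · filter_upwards [ae_restrict_mem measurableSet_Ioi] with t ht w hw
      have h1 : HasDerivAt (fun w : ℂ => -w * (t:ℂ)) (-(t:ℂ)) w := by
        simpa using (hasDerivAt_id w).neg.mul_const (t:ℂ)
      exact (h1.cexp).const_mul ((t:ℂ) ^ (s - 1))
  have hGdiff : ∀ z ∈ U, DifferentiableAt ℂ G z := by
    intro z hz
    apply DifferentiableAt.const_mul
    exact (differentiableAt_id.cpow (differentiableAt_const _) (Or.inl hz))
  have hFd : DifferentiableOn ℂ F U := fun z hz => (hFdiff z hz).differentiableWithinAt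
  have hGd : DifferentiableOn ℂ G U := fun z hz => (hGdiff z hz).differentiableWithinAt
  have hFanal : AnalyticOnNhd ℂ F U := hFd.analyticOnNhd hUopen
  have hGanal : AnalyticOnNhd ℂ G U := hGd.analyticOnNhd hUopen
  have h1U : (1 : ℂ) ∈ U := by simp [hU]
  have hfreq : ∃ᶠ w in nhdsWithin (1:ℂ) {(1:ℂ)}ᶜ, F w = G w := by
    have htt : Tendsto (fun n : ℕ => ((1 + 1/(n+1) : ℝ) : ℂ)) atTop
        (nhdsWithin (1:ℂ) {(1:ℂ)}ᶜ) := by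
      apply tendsto_nhdsWithin_of_tendsto_nhds_of_eventually_within
      · have h0 : Tendsto (fun n : ℕ => (1 + 1/(n+1) : ℝ)) atTop (nhds 1) := by
          simpa using (tendsto_const_nhds (x := (1:ℝ))).add tendsto_one_div_add_atTop_nhds_zero_nat
        have h1 := (Complex.continuous_ofReal.tendsto (1:ℝ)).comp h0
        rw [Complex.ofReal_one] at h1
        exact h1
      · filter_upwards with n
        simp only [mem_compl_iff, mem_singleton_iff]
        intro h
        have h' : (1 + 1/(n+1) : ℝ) = 1 := by exact_mod_cast h
        have hn : (0:ℝ) < 1/(n+1) := by positivity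
        linarith
    apply htt.frequently
    apply Filter.Frequently.of_forall
    intro n
    have hr : (0:ℝ) < 1 + 1/(n+1) := by positivity
    set r : ℝ := 1 + 1/(n+1) with hrdef
    have hval := integral_cpow_mul_exp_neg_mul_Ioi hs hr
    have harg : Complex.arg r ≠ Real.pi := by
      rw [Complex.arg_ofReal_of_nonneg hr.le]
      exact fun h => Real.pi_ne_zero h.symm
    calc F ((r:ℝ):ℂ) = ∫ t in Ioi (0:ℝ), (t : ℂ) ^ (s - 1) * Complex.exp (-((r:ℂ) * t)) := by
          rw [hF]
          simp only [neg_mul]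
      _ = (1/(r:ℂ)) ^ s * Complex.Gamma s := hval
      _ = G ((r:ℝ):ℂ) := by
          rw [hG, one_div, Complex.inv_cpow _ _ harg, ← Complex.cpow_neg, mul_comm]
  have := hFanal.eqOn_of_preconnected_of_frequently_eq hGanal hUconn h1U hfreq
  exact this hb

end AuxLemmasForHLZeta

lemma ascEval_nonneg {c : ℝ} (hc : 0 ≤ c) : ∀ n : ℕ, 0 ≤ (ascPochhammer ℝ n).eval c
  | 0 => by simp
  | (n+1) => by
      rw [ascPochhammer_succ_eval]
      have hn : (0:ℝ) ≤ (n:ℝ) := Nat.cast_nonneg n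
      exact mul_nonneg (ascEval_nonneg hc n) (by linarith)

lemma norm_poch_le (γ : ℂ) : ∀ n : ℕ, ‖poch γ n‖ ≤ (ascPochhammer ℝ n).eval ‖γ‖
  | 0 => by simp [poch]
  | (n+1) => by
      have h1 : poch γ (n+1) = poch γ n * (γ + n) := ascPochhammer_succ_eval n γ
      rw [h1, ascPochhammer_succ_eval, norm_mul]
      have h2 : ‖γ + (n:ℂ)‖ ≤ ‖γ‖ + n := by
        refine le_trans (norm_add_le _ _) ?_
        simp
      exact mul_le_mul (norm_poch_le γ n) h2 (norm_nonneg _)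
        (ascEval_nonneg (norm_nonneg γ) n)

lemma mySummableAux {c r : ℝ} (hc : 0 ≤ c) (hr0 : 0 ≤ r) (hr : r < 1) :
    Summable (fun n : ℕ => (ascPochhammer ℝ n).eval c * r ^ n / (n.factorial : ℝ)) := by
  set q : ℕ → ℝ := fun n => (ascPochhammer ℝ n).eval c * r ^ n / (n.factorial : ℝ) with hq
  have hq0 : ∀ n, 0 ≤ q n := by
    intro n
    apply div_nonneg (mul_nonneg (ascEval_nonneg hc n) (pow_nonneg hr0 n))
    positivity
  have hT : Tendsto (fun n : ℕ => (c + n) * r / ((n:ℝ) + 1)) atTop (nhds r) := by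
    have h0 := tendsto_one_div_add_atTop_nhds_zero_nat.const_mul ((c-1)*r)
    have h1 := (tendsto_const_nhds (x := r) (f := atTop (α := ℕ))).add h0
    have key : ∀ n : ℕ, r + (c-1)*r*(1/((n:ℝ)+1)) = (c + n) * r / ((n:ℝ) + 1) := by
      intro n
      have hne : ((n:ℝ)+1) ≠ 0 := by positivity
      field_simp
      ring
    have h2 := h1.congr key
    simpa using h2
  set l : ℝ := (1 + r)/2 with hl
  have hl1 : l < 1 := by rw [hl]; linarith
  have hrl : r < l := by rw [hl]; linarith
  apply summable_of_ratio_norm_eventually_le hl1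
  filter_upwards [hT.eventually_le_const hrl] with n hn
  rw [Real.norm_of_nonneg (hq0 _), Real.norm_of_nonneg (hq0 _)]
  have hfne : ((n.factorial : ℝ)) ≠ 0 := by positivity
  have hne : ((n:ℝ)+1) ≠ 0 := by positivity
  have hqsucc : q (n+1) = q n * ((c+n) * r / ((n:ℝ)+1)) := by
    rw [hq]
    simp only [ascPochhammer_succ_eval, Nat.factorial_succ, pow_succ]
    push_cast
    field_simp
  rw [hqsucc]
  calc q n * ((c+n)*r/((n:ℝ)+1)) ≤ q n * l := mul_le_mul_of_nonneg_left hn (hq0 n)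
    _ = l * q n := mul_comm _ _

set_option maxHeartbeats 1000000 in
/-- integral representation of the extended Hurwitz–Lerch zeta
function via the extended hypergeometric function. -/
theorem extHLZeta_integral_repr (p lam : ℝ) (γ σ a ϑ υ z : ℂ)
    (hp : 0 ≤ p) (hlam : 0 < lam) (ha : 0 < a.re)
    (hϑ : 0 < ϑ.re) (hυϑ : ϑ.re < υ.re) (hσ : 0 < σ.re) (hz : ‖z‖ < 1) :
    extHLZeta γ ϑ υ z σ a p lam =
      (1 / Complex.Gamma σ) *
        ∫ t in Ioi (0:ℝ), (t : ℂ) ^ (σ - 1) * Complex.exp (-a * t) *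
          extHyper γ ϑ υ p lam (z * Complex.exp (-(t : ℂ))) := by
  by_cases hβ0 : classicalBeta ϑ (υ - ϑ) = 0
  · simp [extHLZeta, extHyper, hβ0]
  set f : ℕ → ℝ → ℂ := fun n t => (t:ℂ) ^ (ϑ + n - 1) * ((1:ℂ) - t) ^ (υ - ϑ - 1) *
    mittagLeffler lam (-(p:ℂ) / ((t:ℂ) * (1 - (t:ℂ)))) with hf
  have hBdef : ∀ n : ℕ, extBeta (ϑ + n) (υ - ϑ) p lam = ∫ t in (0:ℝ)..1, f n t := by
    intro n; rfl
  by_cases hex : ∃ m : ℕ, IntervalIntegrable (f m) volume 0 1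
  case neg =>
    push_neg at hex
    have hB0 : ∀ n : ℕ, extBeta (ϑ + n) (υ - ϑ) p lam = 0 := fun n => by
      rw [hBdef n]; exact intervalIntegral.integral_undef (hex n)
    simp [extHLZeta, extHyper, hB0]
  obtain ⟨m, hm⟩ := hex
  have hΓ : Complex.Gamma σ ≠ 0 := Complex.Gamma_ne_zero_of_re_pos hσ
  set I : ℝ := ∫ t in Ioc (0:ℝ) 1, ‖f m t‖ with hI
  have hI0 : 0 ≤ I := integral_nonneg fun t => norm_nonneg _
  have hmIoc : IntegrableOn (f m) (Ioc 0 1) :=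
    (intervalIntegrable_iff_integrableOn_Ioc_of_le zero_le_one).mp hm
  -- monotonicity of the integrand norms in n
  have hmono : ∀ n : ℕ, m ≤ n → ∀ t ∈ Ioc (0:ℝ) 1, ‖f n t‖ ≤ ‖f m t‖ := by
    intro n hn t ht
    have ht0 : 0 < t := ht.1
    rw [hf]
    simp only [norm_mul]
    have hcp : ∀ k : ℕ, ‖(t:ℂ) ^ (ϑ + k - 1)‖ = t ^ (ϑ.re + k - 1) := by
      intro k
      rw [Complex.norm_cpow_eq_rpow_re_of_pos ht0,
        show (ϑ + (k:ℂ) - 1).re = ϑ.re + k - 1 by simp]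
    rw [hcp n, hcp m]
    have hle : t ^ (ϑ.re + n - 1) ≤ t ^ (ϑ.re + m - 1) := by
      apply Real.rpow_le_rpow_of_exponent_ge ht0 ht.2
      have : (m:ℝ) ≤ (n:ℝ) := Nat.cast_le.mpr hn
      linarith
    exact mul_le_mul_of_nonneg_right
      (mul_le_mul_of_nonneg_right hle (norm_nonneg _)) (norm_nonneg _)
  have hBbound : ∀ n : ℕ, m ≤ n → ‖extBeta (ϑ + n) (υ - ϑ) p lam‖ ≤ I := by
    intro n hn
    by_cases hint : IntervalIntegrable (f n) volume 0 1
    · rw [hBdef n]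
      calc ‖∫ t in (0:ℝ)..1, f n t‖ ≤ ∫ t in (0:ℝ)..1, ‖f n t‖ :=
            intervalIntegral.norm_integral_le_integral_norm zero_le_one
        _ = ∫ t in Ioc (0:ℝ) 1, ‖f n t‖ := intervalIntegral.integral_of_le zero_le_one
        _ ≤ I := by
            rw [hI]
            exact setIntegral_mono_on
              ((intervalIntegrable_iff_integrableOn_Ioc_of_le zero_le_one).mp hint).norm
              hmIoc.norm measurableSet_Ioc (hmono n hn)
    · rw [hBdef n, intervalIntegral.integral_undef hint]
      simpa using hI0
  -- the coefficients
  set C : ℕ → ℂ := fun n => poch γ n * extBeta (ϑ + n) (υ - ϑ) p lam /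
    classicalBeta ϑ (υ - ϑ) * z ^ n / (n.factorial : ℂ) with hC
  set g : ℕ → ℝ → ℂ := fun n t => (t:ℂ) ^ (σ - 1) * Complex.exp (-(a + n) * t) * C n with hg
  have hare : ∀ n : ℕ, 0 < (a + (n:ℂ)).re := by
    intro n
    simp only [Complex.add_re, Complex.natCast_re]
    have : (0:ℝ) ≤ n := Nat.cast_nonneg n
    linarith
  have hgInt : ∀ n : ℕ, Integrable (g n) (volume.restrict (Ioi 0)) := by
    intro n
    exact (myIntegrable hσ (hare n)).mul_const (C n)
  -- the pointwise identity
  have pointwise : ∀ t : ℝ, (t:ℂ) ^ (σ - 1) * Complex.exp (-a * t) *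
      extHyper γ ϑ υ p lam (z * Complex.exp (-(t:ℂ))) = ∑' n, g n t := by
    intro t
    rw [extHyper, ← tsum_mul_left]
    apply tsum_congr
    intro n
    have key : Complex.exp (-a * t) * Complex.exp (-(t:ℂ)) ^ n
        = Complex.exp (-(a + n) * t) := by
      rw [← Complex.exp_nat_mul, ← Complex.exp_add]
      congr 1
      ring
    calc (t:ℂ) ^ (σ - 1) * Complex.exp (-a * t) *
          (poch γ n * extBeta (ϑ + n) (υ - ϑ) p lam / classicalBeta ϑ (υ - ϑ) *
            (z * Complex.exp (-(t:ℂ))) ^ n / (n.factorial : ℂ))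
        = (t:ℂ) ^ (σ - 1) * (Complex.exp (-a * t) * Complex.exp (-(t:ℂ)) ^ n) * C n := by
          rw [hC, mul_pow]
          ring
      _ = g n t := by rw [key, hg]
  -- summability of the integrals of the norms
  have hgnorm : ∀ n : ℕ, ∀ t ∈ Ioi (0:ℝ),
      ‖g n t‖ ≤ t ^ (σ.re - 1) * Real.exp (-a.re * t) * ‖C n‖ := by
    intro n t ht
    have ht0 : 0 < t := ht
    rw [hg]
    simp only [norm_mul]
    rw [show ‖(t:ℂ) ^ (σ - 1)‖ * ‖Complex.exp (-(a + n) * t)‖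
        = ‖(t:ℂ) ^ (σ - 1) * Complex.exp (-(a + n) * t)‖ from (norm_mul _ _).symm,
      myNorm ht0]
    have hexp : Real.exp (-(a + (n:ℂ)).re * t) ≤ Real.exp (-a.re * t) := by
      apply Real.exp_le_exp.mpr
      simp only [Complex.add_re, Complex.natCast_re]
      nlinarith [Nat.cast_nonneg (α := ℝ) n]
    have h1 : t ^ (σ.re - 1) * Real.exp (-(a + (n:ℂ)).re * t)
        ≤ t ^ (σ.re - 1) * Real.exp (-a.re * t) :=
      mul_le_mul_of_nonneg_left hexp (Real.rpow_nonneg ht0.le _)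
    exact mul_le_mul_of_nonneg_right h1 (norm_nonneg _)
  set J : ℝ := ∫ t in Ioi (0:ℝ), t ^ (σ.re - 1) * Real.exp (-a.re * t) with hJ
  have hJint : IntegrableOn (fun t : ℝ => t ^ (σ.re - 1) * Real.exp (-a.re * t)) (Ioi 0) :=
    myIntegrableOn_rpow_exp (by linarith) ha
  have hgnormint : ∀ n : ℕ, (∫ t in Ioi (0:ℝ), ‖g n t‖) ≤ J * ‖C n‖ := by
    intro n
    calc (∫ t in Ioi (0:ℝ), ‖g n t‖)
        ≤ ∫ t in Ioi (0:ℝ), (t ^ (σ.re - 1) * Real.exp (-a.re * t)) * ‖C n‖ :=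
          setIntegral_mono_on (hgInt n).norm (hJint.mul_const _) measurableSet_Ioi
            (fun t ht => hgnorm n t ht)
      _ = J * ‖C n‖ := by rw [integral_mul_const, hJ]
  have hCsum : Summable (fun n : ℕ => ‖C n‖) := by
    rw [← summable_nat_add_iff m]
    have hS := (mySummableAux (norm_nonneg γ) (norm_nonneg z)
      (by simpa using hz)).mul_left (I / ‖classicalBeta ϑ (υ - ϑ)‖)
    have hS2 : Summable (fun k : ℕ => I / ‖classicalBeta ϑ (υ - ϑ)‖ *
        ((ascPochhammer ℝ (k + m)).eval ‖γ‖ * ‖z‖ ^ (k + m) / ((k + m).factorial : ℝ))) :=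
      (summable_nat_add_iff m).mpr hS
    apply Summable.of_nonneg_of_le (fun k => norm_nonneg _) _ hS2
    intro k
    set n := k + m with hn
    have hnm : m ≤ n := by omega
    rw [hC]
    have h1 : ‖poch γ n * extBeta (ϑ + n) (υ - ϑ) p lam /
        classicalBeta ϑ (υ - ϑ) * z ^ n / (n.factorial : ℂ)‖
        = ‖poch γ n‖ * ‖extBeta (ϑ + n) (υ - ϑ) p lam‖ *
          (‖classicalBeta ϑ (υ - ϑ)‖⁻¹ * ‖z‖ ^ n * ((n.factorial : ℝ))⁻¹) := by
      rw [norm_div, norm_mul, norm_div, norm_mul, norm_pow]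
      rw [show ‖((n.factorial : ℕ) : ℂ)‖ = ((n.factorial : ℝ)) by
        rw [Complex.norm_natCast]]
      field_simp
    rw [h1]
    have h2 : ‖poch γ n‖ * ‖extBeta (ϑ + n) (υ - ϑ) p lam‖
        ≤ (ascPochhammer ℝ n).eval ‖γ‖ * I :=
      mul_le_mul (norm_poch_le γ n) (hBbound n hnm) (norm_nonneg _)
        (ascEval_nonneg (norm_nonneg γ) n)
    calc ‖poch γ n‖ * ‖extBeta (ϑ + n) (υ - ϑ) p lam‖ *
          (‖classicalBeta ϑ (υ - ϑ)‖⁻¹ * ‖z‖ ^ n * ((n.factorial : ℝ))⁻¹)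
        ≤ (ascPochhammer ℝ n).eval ‖γ‖ * I *
          (‖classicalBeta ϑ (υ - ϑ)‖⁻¹ * ‖z‖ ^ n * ((n.factorial : ℝ))⁻¹) := by
          apply mul_le_mul_of_nonneg_right h2
          positivity
      _ = I / ‖classicalBeta ϑ (υ - ϑ)‖ *
          ((ascPochhammer ℝ n).eval ‖γ‖ * ‖z‖ ^ n / ((n.factorial : ℝ))) := by
          field_simp
  have hsum : Summable (fun n : ℕ => ∫ t in Ioi (0:ℝ), ‖g n t‖) := by
    apply Summable.of_nonneg_of_le
      (fun n => integral_nonneg fun t => norm_nonneg _) hgnormint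
    exact hCsum.mul_left J
  -- now put it together
  symm
  calc (1 / Complex.Gamma σ) * ∫ t in Ioi (0:ℝ), (t:ℂ) ^ (σ - 1) * Complex.exp (-a * t) *
        extHyper γ ϑ υ p lam (z * Complex.exp (-(t:ℂ)))
      = (1 / Complex.Gamma σ) * ∑' n, ∫ t in Ioi (0:ℝ), g n t := by
        rw [show (∫ t in Ioi (0:ℝ), (t:ℂ) ^ (σ - 1) * Complex.exp (-a * t) *
            extHyper γ ϑ υ p lam (z * Complex.exp (-(t:ℂ))))
            = ∫ t in Ioi (0:ℝ), ∑' n, g n t from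
          integral_congr_ae (Filter.Eventually.of_forall fun t => pointwise t)]
        rw [← MeasureTheory.integral_tsum_of_summable_integral_norm hgInt hsum]
    _ = ∑' n : ℕ, poch γ n * extBeta (ϑ + n) (υ - ϑ) p lam /
        (classicalBeta ϑ (υ - ϑ) * (n.factorial : ℂ)) * z ^ n / ((n : ℂ) + a) ^ σ := by
        rw [← tsum_mul_left]
        apply tsum_congr
        intro n
        have hval : (∫ t in Ioi (0:ℝ), g n t)
            = Complex.Gamma σ * (a + n) ^ (-σ) * C n := by
          rw [hg]
          rw [MeasureTheory.integral_mul_const]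
          rw [myGammaVal hσ (hare n)]
        rw [hval, hC]
        rw [Complex.cpow_neg, show a + (n:ℂ) = (n:ℂ) + a from add_comm _ _]
        field_simp
    _ = extHLZeta γ ϑ υ z σ a p lam := by rw [extHLZeta]
end

section
/- Let p ≥ 0 be real, λ > 0 real, γ, σ complex, a complex that is not a nonpositive integer, ϑ, υ complex with Re(υ) > Re(ϑ) > 0, and n a nonnegative integer. Then for all complex z with |z| < 1, the n-th derivative with respect to z satisfies d^n/dz^n [Φ_{γ,ϑ;υ}(z,σ,a;p,λ)] = ((γ)_n (ϑ)_n / (υ)_n) · Φ_{γ+n,ϑ+n;υ+n}(z,σ,a+n;p,λ). -/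
open MeasureTheory Set Filter

section Aux

lemma extBeta_norm_bound (ϑ υ : ℂ) (p lam : ℝ) :
    ∃ B : ℝ, 0 ≤ B ∧ ∀ k : ℕ, ‖extBeta (ϑ + (k : ℂ)) (υ - ϑ) p lam‖ ≤ B := by
  set ML : ℝ → ℂ := fun t => mittagLeffler lam (-(p : ℂ) / ((t : ℂ) * (1 - (t : ℂ)))) with hML
  set F : ℕ → ℝ → ℂ := fun k t =>
    (t : ℂ) ^ (ϑ + (k : ℂ) - 1) * ((1 : ℂ) - (t : ℂ)) ^ (υ - ϑ - 1) * ML t with hF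
  have hFeq : ∀ k : ℕ, extBeta (ϑ + (k : ℂ)) (υ - ϑ) p lam = ∫ t in (0:ℝ)..1, F k t :=
    fun k => rfl
  have hkey : ∀ (k₀ k : ℕ), k₀ ≤ k → ∀ t ∈ Set.Ioc (0:ℝ) 1,
      F k t = F k₀ t * (t : ℂ) ^ (k - k₀) := by
    intro k₀ k h t ht
    have htne : (t : ℂ) ≠ 0 := by
      exact_mod_cast ne_of_gt ht.1
    have hexp : ϑ + (k : ℂ) - 1 = (ϑ + (k₀ : ℂ) - 1) + ((k - k₀ : ℕ) : ℂ) := by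
      rw [Nat.cast_sub h]
      ring
    simp only [hF]
    rw [hexp, Complex.cpow_add _ _ htne, Complex.cpow_natCast]
    ring
  have hnorm : ∀ (k₀ k : ℕ), k₀ ≤ k → ∀ t ∈ Set.Ioc (0:ℝ) 1, ‖F k t‖ ≤ ‖F k₀ t‖ := by
    intro k₀ k h t ht
    rw [hkey k₀ k h t ht, norm_mul]
    have h1 : ‖(t : ℂ) ^ (k - k₀)‖ ≤ 1 := by
      rw [norm_pow]
      apply pow_le_one₀ (norm_nonneg _)
      rw [Complex.norm_real, Real.norm_eq_abs, abs_of_pos ht.1]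
      exact ht.2
    calc ‖F k₀ t‖ * ‖(t : ℂ) ^ (k - k₀)‖ ≤ ‖F k₀ t‖ * 1 :=
          mul_le_mul_of_nonneg_left h1 (norm_nonneg _)
      _ = ‖F k₀ t‖ := mul_one _
  classical
  by_cases hex : ∃ k : ℕ, IntervalIntegrable (F k) volume 0 1
  · set k₀ := Nat.find hex with hk₀def
    have hk₀ : IntervalIntegrable (F k₀) volume 0 1 := Nat.find_spec hex
    refine ⟨|∫ t in (0:ℝ)..1, ‖F k₀ t‖|, abs_nonneg _, fun k => ?_⟩
    rcases lt_or_ge k k₀ with h | h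
    · have hni : ¬ IntervalIntegrable (F k) volume 0 1 := Nat.find_min hex h
      rw [hFeq, intervalIntegral.integral_undef hni, norm_zero]
      exact abs_nonneg _
    · rw [hFeq]
      apply intervalIntegral.norm_integral_le_abs_of_norm_le
      · rw [Set.uIoc_of_le (by norm_num : (0:ℝ) ≤ 1)]
        exact (ae_restrict_iff' measurableSet_Ioc).mpr
          (Filter.Eventually.of_forall (fun t ht => hnorm k₀ k h t ht))
      · exact hk₀.norm
  · refine ⟨0, le_refl _, fun k => ?_⟩
    rw [hFeq, intervalIntegral.integral_undef (fun hI => hex ⟨k, hI⟩), norm_zero]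

set_option maxHeartbeats 1000000

open FormalMultilinearSeries

lemma radius_ge_one_of_poly_bound (c : ℕ → ℂ) (C : ℝ) (d : ℕ)
    (hc : ∀ k, ‖c k‖ ≤ C * (k + 1) ^ d) :
    1 ≤ (ofScalars ℂ c).radius := by
  refine ENNReal.le_of_forall_nnreal_lt (fun r hr => ?_)
  rcases eq_or_ne r 0 with rfl | hr0
  · simp
  have hr1 : (r : ℝ) < 1 := by exact_mod_cast hr
  apply FormalMultilinearSeries.le_radius_of_summable_norm
  have h1 : Summable (fun n : ℕ => ((n : ℝ)) ^ d * (r : ℝ) ^ n) :=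
    summable_pow_mul_geometric_of_norm_lt_one d (by simpa using hr1)
  have h2 : Summable (fun n : ℕ => ((n + 1 : ℕ) : ℝ) ^ d * (r : ℝ) ^ (n + 1)) :=
    (summable_nat_add_iff 1).mpr h1
  have h3 : Summable (fun n : ℕ => C * (((n : ℝ) + 1) ^ d * (r : ℝ) ^ n)) := by
    refine (h2.mul_left ((r : ℝ)⁻¹ * C)).congr (fun n => ?_)
    have hrne : (r : ℝ) ≠ 0 := by exact_mod_cast hr0
    push_cast
    rw [pow_succ]
    have : (r : ℝ)⁻¹ * C * (((n : ℝ) + 1) ^ d * ((r : ℝ) ^ n * (r : ℝ)))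
        = C * (((n : ℝ) + 1) ^ d * (r : ℝ) ^ n) * ((r : ℝ)⁻¹ * (r : ℝ)) := by ring
    rw [this, inv_mul_cancel₀ hrne, mul_one]
  refine Summable.of_nonneg_of_le (fun n => by positivity) (fun n => ?_) h3
  rw [ofScalars_norm]
  calc ‖c n‖ * (r : ℝ) ^ n ≤ (C * ((n : ℝ) + 1) ^ d) * (r : ℝ) ^ n := by
        have h0 : (0:ℝ) ≤ (r : ℝ) ^ n := by positivity
        exact mul_le_mul_of_nonneg_right (hc n) h0
    _ = C * (((n : ℝ) + 1) ^ d * (r : ℝ) ^ n) := by ring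

lemma deriv_tsum_pow (c : ℕ → ℂ) (C : ℝ) (d : ℕ)
    (hc : ∀ k, ‖c k‖ ≤ C * (k + 1) ^ d) {z : ℂ} (hz : ‖z‖ < 1) :
    deriv (fun w => ∑' k : ℕ, c k * w ^ k) z
      = ∑' k : ℕ, ((k : ℂ) + 1) * c (k + 1) * z ^ k := by
  set p := ofScalars ℂ c with hp
  have hrad : 1 ≤ p.radius := radius_ge_one_of_poly_bound c C d hc
  have hfun : (fun w : ℂ => ∑' k : ℕ, c k * w ^ k) = p.sum := by
    funext w
    rw [show p.sum = ofScalarsSum c from rfl, ofScalars_sum_eq]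
    simp [smul_eq_mul]
  have H : HasFPowerSeriesOnBall p.sum p 0 1 :=
    (p.hasFPowerSeriesOnBall (lt_of_lt_of_le one_pos hrad)).mono one_pos hrad
  have hzmem : z ∈ Metric.eball (0 : ℂ) 1 := by
    rw [Metric.mem_eball, edist_dist, dist_zero_right, ENNReal.ofReal_lt_one]
    exact hz
  have hs := (H.fderiv.hasSum hzmem).mapL (ContinuousLinearMap.apply ℂ ℂ z)
  rw [zero_add] at hs
  have hterm : ∀ n : ℕ, (ContinuousLinearMap.apply ℂ ℂ z) (p.derivSeries n fun _ => z)
      = ((n : ℂ) + 1) * c (n + 1) * z ^ (n + 1) := by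
    intro n
    have h1 : (ContinuousLinearMap.apply ℂ ℂ z) (p.derivSeries n fun _ => z)
        = p.derivSeries n (fun _ => z) z := rfl
    rw [h1, p.derivSeries_apply_diag, ofScalars_apply_eq]
    push_cast [nsmul_eq_mul, smul_eq_mul]
    ring
  have hval : (ContinuousLinearMap.apply ℂ ℂ z) (fderiv ℂ p.sum z) = z * deriv p.sum z := by
    have h1 : (ContinuousLinearMap.apply ℂ ℂ z) (fderiv ℂ p.sum z) = (fderiv ℂ p.sum z) z := rfl
    have h2 : (fderiv ℂ p.sum z) z = z • (fderiv ℂ p.sum z) 1 := by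
      rw [← ContinuousLinearMap.map_smul, smul_eq_mul, mul_one]
    rw [h1, h2, fderiv_apply_one_eq_deriv, smul_eq_mul]
  rw [funext hterm, hval] at hs
  rw [hfun]
  rcases eq_or_ne z 0 with rfl | hz0
  · have hderiv : deriv p.sum 0 = c 1 := by
      rw [H.hasFPowerSeriesAt.deriv, ofScalars_apply_eq]
      simp
    rw [hderiv, tsum_eq_single 0 (fun k hk => by simp [zero_pow hk])]
    simp
  · have hs2 : HasSum (fun n : ℕ => z * (((n : ℂ) + 1) * c (n + 1) * z ^ n))
        (z * deriv p.sum z) := by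
      refine hs.congr_fun fun n => ?_
      ring
    rw [hasSum_mul_left_iff hz0] at hs2
    exact hs2.tsum_eq.symm

lemma poch_poly_bound (γ : ℂ) : ∃ C : ℝ, 0 ≤ C ∧ ∃ d : ℕ, ∀ k : ℕ,
    ‖(ascPochhammer ℂ k).eval γ‖ ≤ C * ((k : ℝ) + 1) ^ d * (k.factorial : ℝ) := by
  set N : ℕ := ⌈‖γ‖⌉₊ + 1 with hN
  have hN1 : 1 ≤ (N : ℝ) := by exact_mod_cast Nat.succ_le_succ (Nat.zero_le _)
  have hγN : ‖γ‖ ≤ (N : ℝ) := by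
    calc ‖γ‖ ≤ (⌈‖γ‖⌉₊ : ℝ) := Nat.le_ceil _
      _ ≤ (N : ℝ) := by exact_mod_cast Nat.le_succ _
  refine ⟨(N : ℝ) ^ N, by positivity, N, ?_⟩
  intro k
  induction k with
  | zero =>
    simp only [ascPochhammer_zero, Polynomial.eval_one, norm_one, Nat.cast_zero,
      Nat.factorial_zero, Nat.cast_one, mul_one, zero_add, one_pow]
    exact one_le_pow₀ hN1
  | succ k ih =>
    rw [ascPochhammer_succ_eval, norm_mul]
    set x : ℝ := (k : ℝ) + 1 with hx
    have hxpos : (0 : ℝ) < x := by positivity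
    have hγk : ‖γ + (k : ℂ)‖ ≤ (N : ℝ) + k := by
      calc ‖γ + (k : ℂ)‖ ≤ ‖γ‖ + ‖(k : ℂ)‖ := norm_add_le _ _
        _ ≤ (N : ℝ) + k := by
            simp only [Complex.norm_natCast]
            linarith
    have hb : 1 + (N : ℝ) * (1 / x) ≤ (1 + 1 / x) ^ N := by
      have h0 : (0 : ℝ) ≤ 1 / x := by positivity
      exact one_add_mul_le_pow (by linarith) N
    have h2 : (1 + 1 / x) ^ N * x ^ N = (x + 1) ^ N := by
      rw [← mul_pow]
      congr 1
      field_simp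
    have key : x ^ N * ((N : ℝ) + k) ≤ (x + 1) ^ N * x := by
      have h3 : x ^ N * (x + (N : ℝ)) = (x ^ N * x) * (1 + (N : ℝ) * (1 / x)) := by
        field_simp
      have h4 : (x ^ N * x) * (1 + (N : ℝ) * (1 / x)) ≤ (x ^ N * x) * (1 + 1 / x) ^ N := by
        have : (0 : ℝ) ≤ x ^ N * x := by positivity
        exact mul_le_mul_of_nonneg_left hb this
      have h5 : (x ^ N * x) * (1 + 1 / x) ^ N = (x + 1) ^ N * x := by
        rw [← h2]; ring
      have h6 : (N : ℝ) + k ≤ x + (N : ℝ) := by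
        rw [hx]; linarith
      calc x ^ N * ((N : ℝ) + k) ≤ x ^ N * (x + (N : ℝ)) := by
            exact mul_le_mul_of_nonneg_left h6 (by positivity)
        _ = (x ^ N * x) * (1 + (N : ℝ) * (1 / x)) := h3
        _ ≤ (x ^ N * x) * (1 + 1 / x) ^ N := h4
        _ = (x + 1) ^ N * x := h5
    have hfact : ((k + 1).factorial : ℝ) = ((k : ℝ) + 1) * (k.factorial : ℝ) := by
      rw [Nat.factorial_succ]
      push_cast
      ring
    have hpos : (0 : ℝ) ≤ ‖γ + (k : ℂ)‖ := norm_nonneg _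
    calc ‖(ascPochhammer ℂ k).eval γ‖ * ‖γ + (k : ℂ)‖
        ≤ ((N : ℝ) ^ N * ((k : ℝ) + 1) ^ N * (k.factorial : ℝ)) * ((N : ℝ) + k) := by
          apply mul_le_mul ih hγk hpos
          positivity
      _ = (N : ℝ) ^ N * (k.factorial : ℝ) * (x ^ N * ((N : ℝ) + k)) := by rw [hx]; ring
      _ ≤ (N : ℝ) ^ N * (k.factorial : ℝ) * ((x + 1) ^ N * x) := by
          apply mul_le_mul_of_nonneg_left key
          positivity
      _ = (N : ℝ) ^ N * (((k + 1 : ℕ) : ℝ) + 1) ^ N * (((k + 1).factorial : ℝ)) := by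
          rw [hfact, hx]
          push_cast
          ring

lemma cpow_inv_poly_bound (σ a : ℂ) (ha : ∀ m : ℕ, a ≠ -(m : ℂ)) :
    ∃ C : ℝ, 0 ≤ C ∧ ∃ d : ℕ, ∀ k : ℕ,
      ‖((k : ℂ) + a) ^ σ‖⁻¹ ≤ C * ((k : ℝ) + 1) ^ d := by
  have hne : ∀ k : ℕ, (k : ℂ) + a ≠ 0 := by
    intro k h
    exact ha k (by linear_combination h)
  set K : ℕ := ⌈‖a‖⌉₊ + 1 with hK
  have hs : (Finset.range K).Nonempty := ⟨0, Finset.mem_range.mpr (Nat.succ_pos _)⟩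
  set m₁ : ℝ := (Finset.range K).inf' hs (fun k => ‖(k : ℂ) + a‖) with hm₁
  have hm₁pos : 0 < m₁ := by
    rw [hm₁, Finset.lt_inf'_iff]
    intro k _
    exact norm_pos_iff.mpr (hne k)
  set m : ℝ := min m₁ 1 with hm
  have hmpos : 0 < m := lt_min hm₁pos one_pos
  have hm1 : m ≤ 1 := min_le_right _ _
  have hlow : ∀ k : ℕ, m ≤ ‖(k : ℂ) + a‖ := by
    intro k
    rcases lt_or_ge k K with hk | hk
    · exact le_trans (min_le_left _ _)
        (Finset.inf'_le _ (Finset.mem_range.mpr hk))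
    · have h1 : (K : ℝ) ≤ (k : ℝ) := by exact_mod_cast hk
      have h2 : ‖a‖ ≤ (⌈‖a‖⌉₊ : ℝ) := Nat.le_ceil _
      have h3 : ‖(k : ℂ)‖ ≤ ‖(k : ℂ) + a‖ + ‖a‖ := by
        calc ‖(k : ℂ)‖ = ‖((k : ℂ) + a) + (-a)‖ := by ring_nf
          _ ≤ ‖(k : ℂ) + a‖ + ‖-a‖ := norm_add_le _ _
          _ = ‖(k : ℂ) + a‖ + ‖a‖ := by rw [norm_neg]
      have h4 : ‖(k : ℂ)‖ = (k : ℝ) := by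
        simp [Complex.norm_natCast]
      have hKcast : (K : ℝ) = (⌈‖a‖⌉₊ : ℝ) + 1 := by
        rw [hK]; push_cast; ring
      have : (1 : ℝ) ≤ ‖(k : ℂ) + a‖ := by
        have : ‖a‖ = ‖a‖ := rfl
        linarith [h3, h4 ▸ h1]
      linarith
  have hup : ∀ k : ℕ, ‖(k : ℂ) + a‖ ≤ (‖a‖ + 1) * ((k : ℝ) + 1) := by
    intro k
    have h1 : ‖(k : ℂ) + a‖ ≤ ‖(k : ℂ)‖ + ‖a‖ := norm_add_le _ _
    have h4 : ‖(k : ℂ)‖ = (k : ℝ) := by simp [Complex.norm_natCast]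
    have hk0 : (0 : ℝ) ≤ (k : ℝ) := Nat.cast_nonneg _
    have ha0 : (0 : ℝ) ≤ ‖a‖ := norm_nonneg _
    nlinarith
  set e : ℝ := -σ.re with he
  set d : ℕ := ⌈e⌉₊ with hd
  refine ⟨Real.exp (Real.pi * |σ.im|) * (m ^ e + (‖a‖ + 1) ^ d), by positivity, d, ?_⟩
  intro k
  set w : ℂ := (k : ℂ) + a with hw
  have hrpos : 0 < ‖w‖ := norm_pos_iff.mpr (hne k)
  have habs : ‖w ^ σ‖⁻¹ = Real.exp (Complex.arg w * σ.im) * ‖w‖ ^ e := by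
    rw [show ‖w ^ σ‖ = ‖w ^ σ‖ from rfl,
      Complex.norm_cpow_of_ne_zero (hne k), inv_div, he, Real.rpow_neg hrpos.le,
      div_eq_mul_inv]
  have hexp : Real.exp (Complex.arg w * σ.im) ≤ Real.exp (Real.pi * |σ.im|) := by
    apply Real.exp_le_exp.mpr
    calc Complex.arg w * σ.im ≤ |Complex.arg w * σ.im| := le_abs_self _
      _ = |Complex.arg w| * |σ.im| := abs_mul _ _
      _ ≤ Real.pi * |σ.im| := by
          apply mul_le_mul_of_nonneg_right (Complex.abs_arg_le_pi w) (abs_nonneg _)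
  have hkey : ‖w‖ ^ e ≤ (m ^ e + (‖a‖ + 1) ^ d) * ((k : ℝ) + 1) ^ d := by
    have hk1 : (1 : ℝ) ≤ ((k : ℝ) + 1) ^ d := one_le_pow₀ (by linarith [Nat.cast_nonneg (α := ℝ) k])
    rcases le_or_gt e 0 with he0 | he0
    · have h1 : ‖w‖ ^ e ≤ m ^ e :=
        Real.rpow_le_rpow_of_nonpos hmpos (hlow k) he0
      have h2 : (0 : ℝ) ≤ (‖a‖ + 1) ^ d := by positivity
      have h3 : (0 : ℝ) ≤ m ^ e := (Real.rpow_pos_of_pos hmpos e).le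
      nlinarith
    · have hbase1 : (1 : ℝ) ≤ (‖a‖ + 1) * ((k : ℝ) + 1) := by
        have ha0 : (0 : ℝ) ≤ ‖a‖ := norm_nonneg _
        have hk0 : (0 : ℝ) ≤ (k : ℝ) := Nat.cast_nonneg _
        nlinarith
      have h1 : ‖w‖ ^ e ≤ ((‖a‖ + 1) * ((k : ℝ) + 1)) ^ e :=
        Real.rpow_le_rpow hrpos.le (hup k) he0.le
      have h2 : ((‖a‖ + 1) * ((k : ℝ) + 1)) ^ e ≤ ((‖a‖ + 1) * ((k : ℝ) + 1)) ^ (d : ℝ) :=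
        Real.rpow_le_rpow_of_exponent_le hbase1 (Nat.le_ceil e)
      have h3 : ((‖a‖ + 1) * ((k : ℝ) + 1)) ^ (d : ℝ) = ((‖a‖ + 1) * ((k : ℝ) + 1)) ^ d :=
        Real.rpow_natCast _ d
      have h4 : ((‖a‖ + 1) * ((k : ℝ) + 1)) ^ d = (‖a‖ + 1) ^ d * ((k : ℝ) + 1) ^ d :=
        mul_pow _ _ _
      have h5 : (0 : ℝ) ≤ m ^ e := (Real.rpow_pos_of_pos hmpos e).le
      nlinarith [h1, h2, h3 ▸ h2, h4]
  calc ‖w ^ σ‖⁻¹ = Real.exp (Complex.arg w * σ.im) * ‖w‖ ^ e := habs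
    _ ≤ Real.exp (Real.pi * |σ.im|) * ((m ^ e + (‖a‖ + 1) ^ d) * ((k : ℝ) + 1) ^ d) := by
        apply mul_le_mul hexp hkey (Real.rpow_pos_of_pos hrpos e).le (Real.exp_pos _).le
    _ = Real.exp (Real.pi * |σ.im|) * (m ^ e + (‖a‖ + 1) ^ d) * ((k : ℝ) + 1) ^ d := by ring

lemma mittagLeffler_one_zero : mittagLeffler 1 0 = 1 := by
  rw [mittagLeffler, tsum_eq_single 0 (fun n hn => by simp [zero_pow hn])]
  norm_num [Real.Gamma_one]

lemma classicalBeta_eq_betaIntegral (x y : ℂ) :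
    classicalBeta x y = Complex.betaIntegral x y := by
  rw [classicalBeta, extBeta, Complex.betaIntegral]
  apply intervalIntegral.integral_congr
  intro t _
  simp only
  have h0 : -((0:ℝ):ℂ) / ((t : ℂ) * (1 - (t : ℂ))) = 0 := by simp
  rw [h0, mittagLeffler_one_zero, mul_one]

lemma classicalBeta_ne_zero {ϑ υ : ℂ} (hϑ : 0 < ϑ.re) (hυϑ : ϑ.re < υ.re) :
    classicalBeta ϑ (υ - ϑ) ≠ 0 := by
  have hs : 0 < (υ - ϑ).re := by rw [Complex.sub_re]; linarith
  have hυ : 0 < υ.re := lt_trans hϑ hυϑ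
  have h1 := Complex.Gamma_mul_Gamma_eq_betaIntegral hϑ hs
  rw [show ϑ + (υ - ϑ) = υ by ring] at h1
  rw [classicalBeta_eq_betaIntegral]
  intro h
  rw [h, mul_zero] at h1
  exact (mul_ne_zero (Complex.Gamma_ne_zero_of_re_pos hϑ)
    (Complex.Gamma_ne_zero_of_re_pos hs)) h1

lemma classicalBeta_succ {ϑ υ : ℂ} (hϑ : 0 < ϑ.re) (hυϑ : ϑ.re < υ.re) :
    classicalBeta (ϑ + 1) (υ - ϑ) = ϑ / υ * classicalBeta ϑ (υ - ϑ) := by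
  have hs : 0 < (υ - ϑ).re := by rw [Complex.sub_re]; linarith
  have hυ : 0 < υ.re := lt_trans hϑ hυϑ
  have hϑ1 : 0 < (ϑ + 1).re := by rw [Complex.add_re, Complex.one_re]; linarith
  have hϑne : ϑ ≠ 0 := fun h => by rw [h] at hϑ; simp at hϑ
  have hυne : υ ≠ 0 := fun h => by rw [h] at hυ; simp at hυ
  have h1 := Complex.Gamma_mul_Gamma_eq_betaIntegral hϑ hs
  have h2 := Complex.Gamma_mul_Gamma_eq_betaIntegral hϑ1 hs
  rw [show ϑ + (υ - ϑ) = υ by ring] at h1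
  rw [show ϑ + 1 + (υ - ϑ) = υ + 1 by ring] at h2
  rw [Complex.Gamma_add_one ϑ hϑne, Complex.Gamma_add_one υ hυne] at h2
  have hΓυ : Complex.Gamma υ ≠ 0 := Complex.Gamma_ne_zero_of_re_pos hυ
  rw [classicalBeta_eq_betaIntegral, classicalBeta_eq_betaIntegral]
  field_simp at h2 ⊢
  -- h2 : ϑ * Γϑ * Γs = υ * Γυ * B(ϑ+1, s)
  -- h1 : Γϑ * Γs = Γυ * B(ϑ, s)
  -- goal : υ * B(ϑ+1,s) = ϑ * B(ϑ,s)
  have h3 : Complex.Gamma υ * (υ * Complex.betaIntegral (ϑ + 1) (υ - ϑ))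
      = Complex.Gamma υ * (ϑ * Complex.betaIntegral ϑ (υ - ϑ)) := by
    linear_combination ϑ * h1 - h2
  have := mul_left_cancel₀ hΓυ h3
  linear_combination this

lemma poch_succ (x : ℂ) (k : ℕ) : poch x (k + 1) = x * poch (x + 1) k := by
  rw [poch, poch, ascPochhammer_succ_left, Polynomial.eval_mul, Polynomial.eval_X,
    Polynomial.eval_comp, Polynomial.eval_add, Polynomial.eval_X, Polynomial.eval_one]

lemma iteratedDeriv_congr_ev {f g : ℂ → ℂ} {x : ℂ} (n : ℕ) (h : f =ᶠ[nhds x] g) :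
    iteratedDeriv n f =ᶠ[nhds x] iteratedDeriv n g := by
  induction n generalizing f g with
  | zero => simpa [iteratedDeriv_zero] using h
  | succ n ih =>
    rw [iteratedDeriv_succ', iteratedDeriv_succ']
    exact ih h.deriv

lemma itd_const_mul (c : ℂ) : ∀ (n : ℕ) (f : ℂ → ℂ) (x : ℂ),
    iteratedDeriv n (fun w => c * f w) x = c * iteratedDeriv n f x
  | 0, f, x => by simp [iteratedDeriv_zero]
  | (n+1), f, x => by
    rw [iteratedDeriv_succ', iteratedDeriv_succ']
    have hd : deriv (fun w => c * f w) = fun w => c * deriv f w :=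
      funext fun w => deriv_const_mul_field c
    rw [hd]
    exact itd_const_mul c n (deriv f) x

noncomputable def hlCoeff (γ ϑ υ σ a : ℂ) (p lam : ℝ) (k : ℕ) : ℂ :=
  poch γ k * extBeta (ϑ + (k : ℂ)) (υ - ϑ) p lam /
    (classicalBeta ϑ (υ - ϑ) * (k.factorial : ℂ)) / ((k : ℂ) + a) ^ σ

lemma extHLZeta_eq_tsum (γ ϑ υ σ a : ℂ) (p lam : ℝ) (w : ℂ) :
    extHLZeta γ ϑ υ w σ a p lam = ∑' k : ℕ, hlCoeff γ ϑ υ σ a p lam k * w ^ k := by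
  rw [extHLZeta]
  apply tsum_congr
  intro k
  rw [hlCoeff]
  ring

lemma hlCoeff_bound (γ ϑ υ σ a : ℂ) (p lam : ℝ) (ha : ∀ m : ℕ, a ≠ -(m : ℂ)) :
    ∃ (C : ℝ) (d : ℕ), ∀ k : ℕ, ‖hlCoeff γ ϑ υ σ a p lam k‖ ≤ C * ((k : ℝ) + 1) ^ d := by
  obtain ⟨C1, hC1, d1, h1⟩ := poch_poly_bound γ
  obtain ⟨B2, hB2, h2⟩ := extBeta_norm_bound ϑ υ p lam
  obtain ⟨C3, hC3, d3, h3⟩ := cpow_inv_poly_bound σ a ha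
  set Bc : ℝ := ‖classicalBeta ϑ (υ - ϑ)‖ with hBc
  refine ⟨C1 * B2 * Bc⁻¹ * C3, d1 + d3, fun k => ?_⟩
  have hfpos : (0 : ℝ) < (k.factorial : ℝ) := by exact_mod_cast k.factorial_pos
  have heq : ‖hlCoeff γ ϑ υ σ a p lam k‖
      = ‖(ascPochhammer ℂ k).eval γ‖ * ‖extBeta (ϑ + (k : ℂ)) (υ - ϑ) p lam‖
        * (Bc⁻¹ * ((k.factorial : ℝ))⁻¹) * ‖((k : ℂ) + a) ^ σ‖⁻¹ := by
    rw [hlCoeff, poch, norm_div, norm_div, norm_mul, norm_mul, Complex.norm_natCast, hBc]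
    field_simp
  rw [heq]
  calc ‖(ascPochhammer ℂ k).eval γ‖ * ‖extBeta (ϑ + (k : ℂ)) (υ - ϑ) p lam‖
        * (Bc⁻¹ * ((k.factorial : ℝ))⁻¹) * ‖((k : ℂ) + a) ^ σ‖⁻¹
      ≤ (C1 * ((k : ℝ) + 1) ^ d1 * (k.factorial : ℝ)) * B2
        * (Bc⁻¹ * ((k.factorial : ℝ))⁻¹) * (C3 * ((k : ℝ) + 1) ^ d3) := by
        have hb1 := h1 k
        have hb2 := h2 k
        have hb3 := h3 k
        have hn1 : (0:ℝ) ≤ ‖(ascPochhammer ℂ k).eval γ‖ := norm_nonneg _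
        have hn2 : (0:ℝ) ≤ ‖extBeta (ϑ + (k : ℂ)) (υ - ϑ) p lam‖ := norm_nonneg _
        have hn4 : (0:ℝ) ≤ ‖((k : ℂ) + a) ^ σ‖⁻¹ := inv_nonneg.mpr (norm_nonneg _)
        have hmid : (0:ℝ) ≤ Bc⁻¹ * ((k.factorial : ℝ))⁻¹ := by positivity
        apply mul_le_mul _ hb3 hn4 (by positivity)
        apply mul_le_mul_of_nonneg_right _ hmid
        exact mul_le_mul hb1 hb2 hn2 (by positivity)
    _ = (C1 * B2 * Bc⁻¹ * C3) * ((k : ℝ) + 1) ^ (d1 + d3)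
        * ((k.factorial : ℝ) * ((k.factorial : ℝ))⁻¹) := by
        rw [pow_add]; ring
    _ = (C1 * B2 * Bc⁻¹ * C3) * ((k : ℝ) + 1) ^ (d1 + d3) := by
        rw [mul_inv_cancel₀ (ne_of_gt hfpos), mul_one]

lemma deriv_extHLZeta (p lam : ℝ) (γ σ a ϑ υ : ℂ)
    (ha : ∀ m : ℕ, a ≠ -(m : ℂ)) (hϑ : 0 < ϑ.re) (hυϑ : ϑ.re < υ.re)
    {z : ℂ} (hz : ‖z‖ < 1) :
    deriv (fun w => extHLZeta γ ϑ υ w σ a p lam) z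
      = γ * ϑ / υ * extHLZeta (γ + 1) (ϑ + 1) (υ + 1) z σ (a + 1) p lam := by
  obtain ⟨C, d, hc⟩ := hlCoeff_bound γ ϑ υ σ a p lam ha
  have h0 : (fun w => extHLZeta γ ϑ υ w σ a p lam)
      = fun w => ∑' k : ℕ, hlCoeff γ ϑ υ σ a p lam k * w ^ k :=
    funext (extHLZeta_eq_tsum γ ϑ υ σ a p lam)
  rw [h0, deriv_tsum_pow _ C d hc hz, extHLZeta, ← tsum_mul_left]
  apply tsum_congr
  intro k
  have hυ : 0 < υ.re := lt_trans hϑ hυϑ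
  have hυne : υ ≠ 0 := fun h => by rw [h] at hυ; simp at hυ
  have hϑne : ϑ ≠ 0 := fun h => by rw [h] at hϑ; simp at hϑ
  have hBne : classicalBeta ϑ (υ - ϑ) ≠ 0 := classicalBeta_ne_zero hϑ hυϑ
  have e0 : (υ + 1) - (ϑ + 1) = υ - ϑ := by ring
  have e1 : (ϑ + ((k + 1 : ℕ) : ℂ)) = ((ϑ + 1) + (k : ℂ)) := by push_cast; ring
  have e2 : (((k + 1 : ℕ)) : ℂ) + a = (k : ℂ) + (a + 1) := by push_cast; ring
  have hfact : (((k + 1).factorial : ℂ)) = ((k : ℂ) + 1) * (k.factorial : ℂ) := by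
    rw [Nat.factorial_succ]; push_cast; ring
  have hk1 : ((k : ℂ) + 1) ≠ 0 := Nat.cast_add_one_ne_zero k
  have hfne : ((k.factorial : ℂ)) ≠ 0 := by
    exact_mod_cast Nat.cast_ne_zero.mpr k.factorial_ne_zero
  have hbase : (k : ℂ) + (a + 1) ≠ 0 := by
    rw [← e2]
    intro h
    exact ha (k + 1) (by linear_combination h)
  have hD : ((k : ℂ) + (a + 1)) ^ σ ≠ 0 := by
    rw [Complex.cpow_def_of_ne_zero hbase]
    exact Complex.exp_ne_zero _
  rw [hlCoeff, poch_succ, e0, classicalBeta_succ hϑ hυϑ, e1, e2, hfact]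
  set A := poch (γ + 1) k with hA
  set E := extBeta (ϑ + 1 + (k : ℂ)) (υ - ϑ) p lam with hE
  set B := classicalBeta ϑ (υ - ϑ) with hB
  set D := ((k : ℂ) + (a + 1)) ^ σ with hDD
  set F := ((k.factorial : ℂ)) with hFF
  field_simp

end Aux

lemma main_aux (p lam : ℝ) (σ : ℂ) : ∀ (n : ℕ) (γ a ϑ υ : ℂ),
    (∀ m : ℕ, a ≠ -(m : ℂ)) → 0 < ϑ.re → ϑ.re < υ.re →
    ∀ z : ℂ, ‖z‖ < 1 →
      iteratedDeriv n (fun w => extHLZeta γ ϑ υ w σ a p lam) z =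
        poch γ n * poch ϑ n / poch υ n *
          extHLZeta (γ + n) (ϑ + n) (υ + n) z σ (a + n) p lam := by
  intro n
  induction n with
  | zero =>
    intro γ a ϑ υ ha hϑ hυϑ z hz
    simp [iteratedDeriv_zero, poch, ascPochhammer_zero]
  | succ n ih =>
    intro γ a ϑ υ ha hϑ hυϑ z hz
    have hυ : 0 < υ.re := lt_trans hϑ hυϑ
    have hzn : ‖z‖ < 1 := hz
    rw [iteratedDeriv_succ']
    have hopen : IsOpen {w : ℂ | ‖w‖ < 1} := isOpen_lt (by continuity) continuous_const
    have hev : deriv (fun w => extHLZeta γ ϑ υ w σ a p lam) =ᶠ[nhds z]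
        (fun w => γ * ϑ / υ * extHLZeta (γ + 1) (ϑ + 1) (υ + 1) w σ (a + 1) p lam) := by
      filter_upwards [hopen.mem_nhds hzn] with w hw
      exact deriv_extHLZeta p lam γ σ a ϑ υ ha hϑ hυϑ hw
    rw [(iteratedDeriv_congr_ev n hev).eq_of_nhds, itd_const_mul]
    have ha' : ∀ m : ℕ, a + 1 ≠ -(m : ℂ) := by
      intro m h
      exact ha (m + 1) (by push_cast; linear_combination h)
    have hϑ' : 0 < (ϑ + 1).re := by rw [Complex.add_re, Complex.one_re]; linarith
    have hυϑ' : (ϑ + 1).re < (υ + 1).re := by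
      simp only [Complex.add_re, Complex.one_re]; linarith
    rw [ih (γ + 1) (a + 1) (ϑ + 1) (υ + 1) ha' hϑ' hυϑ' z hz]
    have e1 : γ + 1 + (n : ℂ) = γ + ((n + 1 : ℕ) : ℂ) := by push_cast; ring
    have e2 : ϑ + 1 + (n : ℂ) = ϑ + ((n + 1 : ℕ) : ℂ) := by push_cast; ring
    have e3 : υ + 1 + (n : ℂ) = υ + ((n + 1 : ℕ) : ℂ) := by push_cast; ring
    have e4 : a + 1 + (n : ℂ) = a + ((n + 1 : ℕ) : ℂ) := by push_cast; ring
    rw [e1, e2, e3, e4, poch_succ γ n, poch_succ ϑ n, poch_succ υ n]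
    ring

/-- `n`-th derivative formula for the extended Hurwitz–Lerch
zeta function. -/
theorem extHLZeta_iteratedDeriv (p lam : ℝ) (γ σ a ϑ υ : ℂ) (n : ℕ)
    (hp : 0 ≤ p) (hlam : 0 < lam) (ha : ∀ m : ℕ, a ≠ -(m : ℂ))
    (hϑ : 0 < ϑ.re) (hυϑ : ϑ.re < υ.re) :
    ∀ z : ℂ, ‖z‖ < 1 →
      iteratedDeriv n (fun w => extHLZeta γ ϑ υ w σ a p lam) z =
        poch γ n * poch ϑ n / poch υ n *
          extHLZeta (γ + n) (ϑ + n) (υ + n) z σ (a + n) p lam := by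
  exact main_aux p lam σ n γ a ϑ υ ha hϑ hυϑ
end

section
/- Let p > 0 be real, λ > 0 real, and σ₁, σ₂ complex with Re(σ₁) > 0 and Re(σ₂) > 0. Then the extended beta function has the integral representation over the half-line B(σ₁,σ₂;p,λ) = ∫_0^∞ x^{σ₁−1}/(1+x)^{σ₁+σ₂} · E_λ(−p(2 + x + 1/x)) dx. -/
open MeasureTheory Set Filter

lemma cpow_ne_zero' {x : ℂ} (y : ℂ) (h : x ≠ 0) : x ^ y ≠ 0 := by
  simp [Complex.cpow_def, h]

lemma alg (a b c u : ℂ) (hb : b ≠ 0) (hu : u ≠ 0) :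
    (u * u)⁻¹ * (a * b⁻¹ * (c * b * u * u)) = a * c := by
  field_simp

lemma key (σ₁ σ₂ : ℂ) (p lam : ℝ) (t : ℝ) (ht : t ∈ Ioo (0:ℝ) 1) :
    |1 / (1 - t) ^ 2| •
      (((t / (1 - t) : ℝ) : ℂ) ^ (σ₁ - 1) / ((1 : ℂ) + ((t / (1 - t) : ℝ) : ℂ)) ^ (σ₁ + σ₂) *
        mittagLeffler lam (-(p : ℂ) * (2 + ((t / (1 - t) : ℝ) : ℂ) + 1 / ((t / (1 - t) : ℝ) : ℂ)))) =
    (t : ℂ) ^ (σ₁ - 1) * ((1 : ℂ) - (t : ℂ)) ^ (σ₂ - 1) *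
      mittagLeffler lam (-(p : ℂ) / ((t : ℂ) * (1 - (t : ℂ)))) := by
  obtain ⟨ht0, ht1⟩ := ht
  have hu : (0:ℝ) < 1 - t := by linarith
  have htC : (t : ℂ) ≠ 0 := Complex.ofReal_ne_zero.2 ht0.ne'
  have huC : ((1:ℂ) - (t : ℂ)) ≠ 0 := by
    have h1 : (1:ℂ) ≠ (t:ℂ) := by exact_mod_cast ht1.ne'
    exact sub_ne_zero.2 h1
  -- Mittag-Leffler argument equality
  have hML : -(p : ℂ) * (2 + ((t / (1 - t) : ℝ) : ℂ) + 1 / ((t / (1 - t) : ℝ) : ℂ)) =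
      -(p : ℂ) / ((t : ℂ) * (1 - (t : ℂ))) := by
    push_cast
    field_simp
    ring
  rw [hML]
  rw [abs_of_pos (by positivity)]
  have hsmul : (1 / (1 - t) ^ 2 : ℝ) • (((t / (1 - t) : ℝ) : ℂ) ^ (σ₁ - 1) /
      ((1 : ℂ) + ((t / (1 - t) : ℝ) : ℂ)) ^ (σ₁ + σ₂) *
      mittagLeffler lam (-(p : ℂ) / ((t : ℂ) * (1 - (t : ℂ))))) =
      ((1 / (1 - t) ^ 2 : ℝ) : ℂ) * (((t / (1 - t) : ℝ) : ℂ) ^ (σ₁ - 1) /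
      ((1 : ℂ) + ((t / (1 - t) : ℝ) : ℂ)) ^ (σ₁ + σ₂)) *
      mittagLeffler lam (-(p : ℂ) / ((t : ℂ) * (1 - (t : ℂ)))) := by
    rw [Complex.real_smul]; ring
  rw [hsmul]
  congr 1
  -- now the pure power identity
  have h1 : ((1 : ℂ) + ((t / (1 - t) : ℝ) : ℂ)) = (((1 - t)⁻¹ : ℝ) : ℂ) := by
    push_cast
    field_simp
    ring
  have h2 : ((t / (1 - t) : ℝ) : ℂ) ^ (σ₁ - 1) =
      (t : ℂ) ^ (σ₁ - 1) * (((1 - t : ℝ) : ℂ) ^ (σ₁ - 1))⁻¹ := by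
    have : (t / (1 - t) : ℝ) = t * (1 - t)⁻¹ := by ring
    rw [this, Complex.ofReal_mul, Complex.mul_cpow_ofReal_nonneg ht0.le (by positivity),
      Complex.ofReal_inv, Complex.inv_cpow]
    rw [Complex.arg_ofReal_of_nonneg hu.le]
    exact Real.pi_ne_zero.symm
  have h3 : (((1 - t)⁻¹ : ℝ) : ℂ) ^ (σ₁ + σ₂) = ((((1 - t : ℝ)) : ℂ) ^ (σ₁ + σ₂))⁻¹ := by
    rw [Complex.ofReal_inv, Complex.inv_cpow]
    rw [Complex.arg_ofReal_of_nonneg hu.le]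
    exact Real.pi_ne_zero.symm
  have huC' : ((1 - t : ℝ) : ℂ) ≠ 0 := Complex.ofReal_ne_zero.2 hu.ne'
  have h4 : (((1 - t : ℝ)) : ℂ) ^ (σ₁ + σ₂) =
      ((1 - t : ℝ) : ℂ) ^ (σ₂ - 1) * ((1 - t : ℝ) : ℂ) ^ (σ₁ - 1) *
      ((1 - t : ℝ) : ℂ) * ((1 - t : ℝ) : ℂ) := by
    rw [show σ₁ + σ₂ = (σ₂ - 1) + ((σ₁ - 1) + (1 + 1)) by ring,
      Complex.cpow_add _ _ huC', Complex.cpow_add _ _ huC', Complex.cpow_add _ _ huC',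
      Complex.cpow_one]
    ring
  have hne1 : ((1 - t : ℝ) : ℂ) ^ (σ₁ - 1) ≠ 0 := cpow_ne_zero' _ huC'
  rw [h1, h2, h3, h4]
  have hcast : ((1 - t : ℝ) : ℂ) = 1 - (t : ℂ) := by push_cast; ring
  rw [hcast] at *
  have h5 : ((1 / (1 - t) ^ 2 : ℝ) : ℂ) = ((1 - (t:ℂ)) * (1 - (t:ℂ)))⁻¹ := by
    push_cast
    rw [one_div, sq]
  rw [h5, div_eq_mul_inv, inv_inv]
  exact alg _ _ _ _ (cpow_ne_zero' _ huC) huC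

/-- half-line integral representation of the extended beta
function. -/
theorem extBeta_halfLine_repr (p lam : ℝ) (σ₁ σ₂ : ℂ)
    (hp : 0 < p) (hlam : 0 < lam) (hσ₁ : 0 < σ₁.re) (hσ₂ : 0 < σ₂.re) :
    extBeta σ₁ σ₂ p lam =
      ∫ x in Ioi (0:ℝ), (x : ℂ) ^ (σ₁ - 1) / ((1 : ℂ) + (x : ℂ)) ^ (σ₁ + σ₂) *
        mittagLeffler lam (-(p : ℂ) * (2 + (x : ℂ) + 1 / (x : ℂ))) := by
  have himg : (fun t : ℝ => t / (1 - t)) '' Ioo 0 1 = Ioi (0:ℝ) := by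
    ext y
    constructor
    · rintro ⟨t, ⟨ht0, ht1⟩, rfl⟩
      exact div_pos ht0 (by linarith)
    · intro hy
      have hy' : (0:ℝ) < y := hy
      have h1y : (0:ℝ) < 1 + y := by linarith
      refine ⟨y / (1 + y), ⟨div_pos hy' h1y, (div_lt_one h1y).2 (by linarith)⟩, ?_⟩
      field_simp
      ring
  have hderiv : ∀ t ∈ Ioo (0:ℝ) 1, HasDerivWithinAt (fun t : ℝ => t / (1 - t))
      (1 / (1 - t) ^ 2) (Ioo 0 1) t := by
    intro t ht
    have hu : (1:ℝ) - t ≠ 0 := by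
      have := ht.2; intro h; linarith [h]
    have h := (hasDerivAt_id t).div ((hasDerivAt_id t).const_sub 1) hu
    simp only [id] at h
    have h2 : (1 * (1 - t) - t * (-1)) / (1 - t) ^ 2 = 1 / (1 - t) ^ 2 := by
      ring
    rw [h2] at h
    exact h.hasDerivWithinAt
  have hinj : InjOn (fun t : ℝ => t / (1 - t)) (Ioo 0 1) := by
    intro a ha b hb hab
    have ha' : (1:ℝ) - a > 0 := by linarith [ha.2]
    have hb' : (1:ℝ) - b > 0 := by linarith [hb.2]
    have := (div_eq_div_iff ha'.ne' hb'.ne').1 hab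
    nlinarith
  rw [extBeta, intervalIntegral.integral_of_le zero_le_one,
    MeasureTheory.integral_Ioc_eq_integral_Ioo, ← himg,
    MeasureTheory.integral_image_eq_integral_abs_deriv_smul measurableSet_Ioo hderiv hinj]
  refine (MeasureTheory.setIntegral_congr_fun measurableSet_Ioo ?_).symm
  intro t ht
  simpa using key σ₁ σ₂ p lam t ht
end

section
/- Let p ≥ 0 be real, λ > 0 real, σ complex, a complex that is not a nonpositive integer, ϑ, υ complex with Re(υ) > Re(ϑ) > 0, and z complex with |z| < 1. Then, as the real parameter γ tends to +∞, Φ_{γ,ϑ;υ}(z/γ, σ, a; p, λ) converges to Φ*_{ϑ;υ}(z,σ,a;p,λ) = ∑_{n=0}^∞ B(ϑ+n,υ−ϑ;p,λ)/(B(ϑ,υ−ϑ) n!) · z^n/(n+a)^σ. -/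
open MeasureTheory Set Filter

open Topology

/- ### Auxiliary lemmas -/

lemma poch_eq_prod (x : ℂ) (n : ℕ) : poch x n = ∏ i ∈ Finset.range n, (x + i) := by
  induction n with
  | zero => simp [poch]
  | succ m ih =>
    rw [poch, ascPochhammer_succ_eval, ← poch, ih, Finset.prod_range_succ]

lemma summable_aux (k : ℕ) {r : ℝ} (h0 : 0 ≤ r) (h1 : r < 1) :
    Summable fun n : ℕ => ((n : ℝ) + 1) ^ k * r ^ n := by
  have hs : ∀ j : ℕ, Summable fun n : ℕ => (k.choose j : ℝ) * ((n : ℝ) ^ j * r ^ n) := fun j =>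
    (summable_pow_mul_geometric_of_norm_lt_one (R := ℝ) j
      (by rwa [Real.norm_eq_abs, abs_of_nonneg h0])).mul_left _
  refine (summable_sum (s := Finset.range (k+1)) fun j _ => hs j).congr fun n => ?_
  rw [add_pow, Finset.sum_mul]
  refine Finset.sum_congr rfl fun j _ => ?_
  simp only [one_pow, mul_one]
  ring

/-- The integrand of the extended beta function `B(ϑ+n, υ-ϑ; p, λ)`. -/
noncomputable def FInt (ϑ υ : ℂ) (p lam : ℝ) (n : ℕ) (t : ℝ) : ℂ :=
  (t : ℂ) ^ (ϑ + n - 1) * ((1 : ℂ) - (t : ℂ)) ^ (υ - ϑ - 1) *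
    mittagLeffler lam (-(p : ℂ) / ((t : ℂ) * (1 - (t : ℂ))))

lemma extBeta_eq_FInt (ϑ υ : ℂ) (p lam : ℝ) (n : ℕ) :
    extBeta (ϑ + n) (υ - ϑ) p lam = ∫ t in (0:ℝ)..1, FInt ϑ υ p lam n t := rfl

lemma exists_bound (ϑ υ : ℂ) (p lam : ℝ) :
    ∃ M : ℝ, 0 ≤ M ∧ ∀ n : ℕ, ‖extBeta (ϑ + n) (υ - ϑ) p lam‖ ≤ M := by
  by_cases hex : ∃ N, IntervalIntegrable (FInt ϑ υ p lam N) volume 0 1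
  · obtain ⟨N, hN⟩ := hex
    rw [intervalIntegrable_iff_integrableOn_Ioc_of_le zero_le_one] at hN
    have hmulF : ∀ n, N ≤ n → ∀ t ∈ Ioc (0:ℝ) 1,
        FInt ϑ υ p lam n t = (t:ℂ) ^ (n - N) * FInt ϑ υ p lam N t := by
      intro n hn t ht
      have ht0 : (t:ℂ) ≠ 0 := by exact_mod_cast ne_of_gt ht.1
      have hexp : ϑ + n - 1 = (((n - N : ℕ) : ℂ)) + (ϑ + N - 1) := by
        push_cast [Nat.cast_sub hn]
        ring
      simp only [FInt]
      rw [hexp, Complex.cpow_add _ _ ht0, Complex.cpow_natCast]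
      ring
    have hnormF : ∀ n, N ≤ n → ∀ t ∈ Ioc (0:ℝ) 1,
        ‖FInt ϑ υ p lam n t‖ ≤ ‖FInt ϑ υ p lam N t‖ := by
      intro n hn t ht
      rw [hmulF n hn t ht, norm_mul]
      have h1 : ‖(t:ℂ) ^ (n - N)‖ ≤ 1 := by
        rw [norm_pow, Complex.norm_real, Real.norm_eq_abs, abs_of_pos ht.1]
        exact pow_le_one₀ ht.1.le ht.2
      calc ‖(t:ℂ) ^ (n - N)‖ * ‖FInt ϑ υ p lam N t‖ ≤ 1 * ‖FInt ϑ υ p lam N t‖ :=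
            mul_le_mul_of_nonneg_right h1 (norm_nonneg _)
        _ = ‖FInt ϑ υ p lam N t‖ := one_mul _
    have hIntOn : ∀ n, N ≤ n → IntegrableOn (FInt ϑ υ p lam n) (Ioc (0:ℝ) 1) := by
      intro n hn
      have hae : FInt ϑ υ p lam n =ᵐ[volume.restrict (Ioc (0:ℝ) 1)]
          fun t => (t:ℂ) ^ (n - N) * FInt ϑ υ p lam N t := by
        filter_upwards [ae_restrict_mem measurableSet_Ioc] with t ht
        exact hmulF n hn t ht
      have hmeas : AEStronglyMeasurable (FInt ϑ υ p lam n) (volume.restrict (Ioc (0:ℝ) 1)) := by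
        exact (((Complex.continuous_ofReal.pow _).aestronglyMeasurable).mul
          hN.aestronglyMeasurable).congr hae.symm
      refine Integrable.mono' hN.norm hmeas ?_
      filter_upwards [ae_restrict_mem measurableSet_Ioc] with t ht
      exact hnormF n hn t ht
    have key : ∀ n, N ≤ n →
        ‖extBeta (ϑ + n) (υ - ϑ) p lam‖ ≤ ∫ t in (0:ℝ)..1, ‖FInt ϑ υ p lam N t‖ := by
      intro n hn
      rw [extBeta_eq_FInt]
      refine (intervalIntegral.norm_integral_le_integral_norm zero_le_one).trans ?_
      rw [intervalIntegral.integral_of_le zero_le_one,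
          intervalIntegral.integral_of_le zero_le_one]
      refine integral_mono_ae ((hIntOn n hn).norm) hN.norm ?_
      filter_upwards [ae_restrict_mem measurableSet_Ioc] with t ht
      exact hnormF n hn t ht
    have h1 : 0 ≤ ∫ t in (0:ℝ)..1, ‖FInt ϑ υ p lam N t‖ :=
      intervalIntegral.integral_nonneg zero_le_one fun t _ => norm_nonneg _
    have h2 : 0 ≤ ∑ i ∈ Finset.range N, ‖extBeta (ϑ + i) (υ - ϑ) p lam‖ :=
      Finset.sum_nonneg fun i _ => norm_nonneg _
    refine ⟨(∫ t in (0:ℝ)..1, ‖FInt ϑ υ p lam N t‖) +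
      ∑ i ∈ Finset.range N, ‖extBeta (ϑ + i) (υ - ϑ) p lam‖, by linarith, ?_⟩
    intro n
    rcases lt_or_ge n N with h | h
    · have := Finset.single_le_sum (f := fun i : ℕ => ‖extBeta (ϑ + i) (υ - ϑ) p lam‖)
        (fun i _ => norm_nonneg _) (Finset.mem_range.mpr h)
      linarith
    · have := key n h
      linarith
  · push_neg at hex
    refine ⟨0, le_refl 0, fun n => ?_⟩
    rw [extBeta_eq_FInt, intervalIntegral.integral_undef (hex n), norm_zero]

lemma exists_delta {a : ℂ} (hwn : ∀ n : ℕ, ((n:ℂ) + a) ≠ 0) :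
    ∃ δ : ℝ, 0 < δ ∧ δ ≤ 1 ∧ ∀ n : ℕ, δ ≤ ‖(n:ℂ) + a‖ := by
  set N := ⌈‖a‖⌉₊ with hNdef
  have hne : (Finset.range (N+1)).Nonempty := Finset.nonempty_range_iff.mpr (Nat.succ_ne_zero N)
  set δ₀ := (Finset.range (N+1)).inf' hne (fun i => ‖(i:ℂ) + a‖) with hd0
  have hδ₀pos : 0 < δ₀ := by
    rw [hd0, Finset.lt_inf'_iff]
    exact fun i _ => norm_pos_iff.mpr (hwn i)
  refine ⟨min δ₀ 1, lt_min hδ₀pos one_pos, min_le_right _ _, fun n => ?_⟩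
  rcases le_or_gt n N with h | h
  · exact le_trans (min_le_left _ _)
      (Finset.inf'_le _ (Finset.mem_range.mpr (Nat.lt_succ_of_le h)))
  · refine le_trans (min_le_right _ _) ?_
    have h1 : ‖(n:ℂ)‖ ≤ ‖(n:ℂ) + a‖ + ‖a‖ := by
      calc ‖(n:ℂ)‖ = ‖((n:ℂ) + a) + (-a)‖ := by congr 1; ring
        _ ≤ ‖(n:ℂ) + a‖ + ‖(-a)‖ := norm_add_le _ _
        _ = ‖(n:ℂ) + a‖ + ‖a‖ := by rw [norm_neg]
    have h2 : (‖a‖ : ℝ) ≤ N := Nat.le_ceil _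
    have h3 : (N:ℝ) + 1 ≤ (n:ℝ) := by exact_mod_cast h
    have h4 : ‖(n:ℂ)‖ = (n:ℝ) := by simp
    linarith

lemma cpow_inv_bound (σ : ℂ) {a : ℂ} {δ : ℝ} (hδ0 : 0 < δ) (hδ1 : δ ≤ 1)
    (hδ : ∀ n : ℕ, δ ≤ ‖(n:ℂ) + a‖) (hwn : ∀ n : ℕ, ((n:ℂ) + a) ≠ 0) (n : ℕ) :
    ‖((n:ℂ) + a) ^ σ‖⁻¹ ≤ (Real.exp (Real.pi * |σ.im|) * δ ^ (-|σ.re|) *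
      (1 + ‖a‖) ^ ⌈|σ.re|⌉₊) * ((n:ℝ) + 1) ^ ⌈|σ.re|⌉₊ := by
  set k := ⌈|σ.re|⌉₊ with hk
  have hw := hwn n
  have hwpos : 0 < ‖(n:ℂ) + a‖ := norm_pos_iff.mpr hw
  have hδr : 0 < δ ^ (-|σ.re|) := Real.rpow_pos_of_pos hδ0 _
  have habs : ‖((n:ℂ) + a) ^ σ‖ =
      ‖(n:ℂ) + a‖ ^ σ.re / Real.exp (Complex.arg ((n:ℂ) + a) * σ.im) := by
    rw [Complex.norm_cpow_of_ne_zero hw]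
  rw [habs, div_eq_mul_inv, mul_inv, inv_inv, ← Real.rpow_neg hwpos.le]
  have harg : Real.exp (Complex.arg ((n:ℂ) + a) * σ.im) ≤ Real.exp (Real.pi * |σ.im|) := by
    apply Real.exp_le_exp.mpr
    calc Complex.arg ((n:ℂ) + a) * σ.im ≤ |Complex.arg ((n:ℂ) + a) * σ.im| := le_abs_self _
      _ = |Complex.arg ((n:ℂ) + a)| * |σ.im| := abs_mul _ _
      _ ≤ Real.pi * |σ.im| :=
          mul_le_mul_of_nonneg_right (Complex.abs_arg_le_pi _) (abs_nonneg _)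
  set R := (1 + ‖a‖) * ((n:ℝ) + 1) with hR
  have hn0 : (0:ℝ) ≤ (n:ℝ) := Nat.cast_nonneg n
  have ha0 : (0:ℝ) ≤ ‖a‖ := norm_nonneg a
  have hR1 : (1:ℝ) ≤ R := by rw [hR]; nlinarith
  have hwR : ‖(n:ℂ) + a‖ ≤ R := by
    have h5 : ‖(n:ℂ) + a‖ ≤ ‖(n:ℂ)‖ + ‖a‖ := norm_add_le _ _
    have h4 : ‖(n:ℂ)‖ = (n:ℝ) := by simp
    rw [hR]; nlinarith
  have hmain : ‖(n:ℂ) + a‖ ^ (-σ.re) ≤ δ ^ (-|σ.re|) * R ^ |σ.re| := by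
    rcases le_or_gt 0 σ.re with he | he
    · have h1 : ‖(n:ℂ) + a‖ ^ (-σ.re) ≤ δ ^ (-σ.re) :=
        Real.rpow_le_rpow_of_nonpos hδ0 (hδ n) (neg_nonpos.mpr he)
      have h2 : -σ.re = -|σ.re| := by rw [abs_of_nonneg he]
      have h3 : (1:ℝ) ≤ R ^ |σ.re| := Real.one_le_rpow hR1 (abs_nonneg _)
      calc ‖(n:ℂ) + a‖ ^ (-σ.re) ≤ δ ^ (-|σ.re|) := h2 ▸ h1
        _ = δ ^ (-|σ.re|) * 1 := (mul_one _).symm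
        _ ≤ δ ^ (-|σ.re|) * R ^ |σ.re| := mul_le_mul_of_nonneg_left h3 hδr.le
    · have h2 : -σ.re = |σ.re| := (abs_of_neg he).symm
      have h1 : ‖(n:ℂ) + a‖ ^ |σ.re| ≤ R ^ |σ.re| :=
        Real.rpow_le_rpow hwpos.le hwR (abs_nonneg _)
      have h3 : (1:ℝ) ≤ δ ^ (-|σ.re|) :=
        Real.one_le_rpow_of_pos_of_le_one_of_nonpos hδ0 hδ1 (neg_nonpos.mpr (abs_nonneg _))
      calc ‖(n:ℂ) + a‖ ^ (-σ.re) = ‖(n:ℂ) + a‖ ^ |σ.re| := by rw [h2]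
        _ ≤ R ^ |σ.re| := h1
        _ = 1 * R ^ |σ.re| := (one_mul _).symm
        _ ≤ δ ^ (-|σ.re|) * R ^ |σ.re| :=
            mul_le_mul_of_nonneg_right h3 (Real.rpow_nonneg (by positivity) _)
  have hRk : R ^ |σ.re| ≤ (1 + ‖a‖) ^ k * ((n:ℝ) + 1) ^ k := by
    calc R ^ |σ.re| ≤ R ^ (k:ℝ) := Real.rpow_le_rpow_of_exponent_le hR1 (Nat.le_ceil _)
      _ = R ^ k := Real.rpow_natCast _ _
      _ = (1 + ‖a‖) ^ k * ((n:ℝ) + 1) ^ k := by rw [hR, mul_pow]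
  calc ‖(n:ℂ) + a‖ ^ (-σ.re) * Real.exp (Complex.arg ((n:ℂ) + a) * σ.im)
      ≤ (δ ^ (-|σ.re|) * ((1 + ‖a‖) ^ k * ((n:ℝ) + 1) ^ k)) *
        Real.exp (Real.pi * |σ.im|) := by
        refine mul_le_mul ?_ harg (Real.exp_pos _).le (by positivity)
        exact hmain.trans (mul_le_mul_of_nonneg_left hRk hδr.le)
    _ = (Real.exp (Real.pi * |σ.im|) * δ ^ (-|σ.re|) * (1 + ‖a‖) ^ k) * ((n:ℝ) + 1) ^ k := by
        ring

lemma poch_mul_inv_pow_tendsto (n : ℕ) :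
    Tendsto (fun γ : ℝ => poch (γ:ℂ) n * ((γ:ℂ))⁻¹ ^ n) atTop (𝓝 1) := by
  have hinv : Tendsto (fun γ : ℝ => ((γ:ℂ))⁻¹) atTop (𝓝 0) := by
    have h1 : Tendsto (fun γ : ℝ => γ⁻¹) atTop (𝓝 0) := tendsto_inv_atTop_zero
    have h2 := (Complex.continuous_ofReal.tendsto 0).comp h1
    simpa [Function.comp_def, Complex.ofReal_inv] using h2
  have hprod : Tendsto (fun γ : ℝ => ∏ i ∈ Finset.range n, (1 + (i:ℂ) * ((γ:ℂ))⁻¹))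
      atTop (𝓝 (∏ _i ∈ Finset.range n, (1:ℂ))) := by
    refine tendsto_finset_prod _ fun i _ => ?_
    have h3 := (tendsto_const_nhds (x := (1:ℂ)) (f := atTop (α := ℝ))).add
      (hinv.const_mul (i:ℂ))
    simpa using h3
  rw [Finset.prod_const_one] at hprod
  refine Tendsto.congr' ?_ hprod
  filter_upwards [eventually_ge_atTop (1:ℝ)] with γ hγ
  have hγ0 : (γ:ℂ) ≠ 0 := Complex.ofReal_ne_zero.mpr (by linarith)
  calc ∏ i ∈ Finset.range n, (1 + (i:ℂ) * ((γ:ℂ))⁻¹)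
      = ∏ i ∈ Finset.range n, (((γ:ℂ) + i) * ((γ:ℂ))⁻¹) := by
        refine Finset.prod_congr rfl fun i _ => ?_
        field_simp
    _ = (∏ i ∈ Finset.range n, ((γ:ℂ) + i)) * ((γ:ℂ))⁻¹ ^ n := by
        rw [Finset.prod_mul_distrib, Finset.prod_const, Finset.card_range]
    _ = poch (γ:ℂ) n * ((γ:ℂ))⁻¹ ^ n := by rw [poch_eq_prod]

lemma poch_norm_le {γ : ℝ} (hγ : 1 ≤ γ) (n : ℕ) :
    ‖poch (γ:ℂ) n‖ ≤ γ ^ n * (n.factorial : ℝ) := by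
  rw [poch_eq_prod, norm_prod]
  have hγ0 : (0:ℝ) < γ := lt_of_lt_of_le one_pos hγ
  calc ∏ i ∈ Finset.range n, ‖(γ:ℂ) + (i:ℂ)‖
      ≤ ∏ i ∈ Finset.range n, (γ * ((i:ℝ) + 1)) := by
        refine Finset.prod_le_prod (fun i _ => norm_nonneg _) fun i _ => ?_
        have he : ((γ:ℂ) + (i:ℂ)) = ((γ + (i:ℝ) : ℝ) : ℂ) := by push_cast; ring
        have hi : (0:ℝ) ≤ (i:ℝ) := Nat.cast_nonneg i
        rw [he, Complex.norm_real, Real.norm_eq_abs, abs_of_pos (by positivity)]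
        nlinarith
    _ = γ ^ n * (n.factorial : ℝ) := by
        rw [Finset.prod_mul_distrib, Finset.prod_const, Finset.card_range]
        congr 1
        rw [← Finset.prod_range_add_one_eq_factorial, Nat.cast_prod]
        exact Finset.prod_congr rfl fun i _ => by push_cast; ring

/-- limiting case of the extended Hurwitz–Lerch zeta function
as the real parameter `γ → +∞`. -/
theorem extHLZeta_tendsto_limit (p lam : ℝ) (σ a ϑ υ z : ℂ)
    (hp : 0 ≤ p) (hlam : 0 < lam) (ha : ∀ m : ℕ, a ≠ -(m : ℂ))
    (hϑ : 0 < ϑ.re) (hυϑ : ϑ.re < υ.re) (hz : ‖z‖ < 1) :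
    Tendsto (fun γ : ℝ => extHLZeta (γ : ℂ) ϑ υ (z / (γ : ℂ)) σ a p lam)
      atTop (nhds (limitHLZeta ϑ υ z σ a p lam)) := by
  by_cases hB : classicalBeta ϑ (υ - ϑ) = 0
  · simp only [extHLZeta, limitHLZeta, hB, zero_mul, div_zero, zero_div, tsum_zero]
    exact tendsto_const_nhds
  have hBn : (0:ℝ) < ‖classicalBeta ϑ (υ - ϑ)‖ := norm_pos_iff.mpr hB
  have hwn : ∀ n : ℕ, ((n:ℂ) + a) ≠ 0 := by
    intro n h
    exact ha n (by linear_combination h)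
  obtain ⟨M, hM0, hM⟩ := exists_bound ϑ υ p lam
  obtain ⟨δ, hδ0, hδ1, hδ⟩ := exists_delta hwn
  have hzn : ‖z‖ < 1 := hz
  have hsum : Summable fun n : ℕ =>
      (M / ‖classicalBeta ϑ (υ - ϑ)‖ * (Real.exp (Real.pi * |σ.im|) * δ ^ (-|σ.re|) *
        (1 + ‖a‖) ^ ⌈|σ.re|⌉₊)) * (((n:ℝ) + 1) ^ ⌈|σ.re|⌉₊ * ‖z‖ ^ n) :=
    (summable_aux _ (norm_nonneg z) hzn).mul_left _
  simp only [extHLZeta, limitHLZeta]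
  refine tendsto_tsum_of_dominated_convergence hsum (fun n => ?_) ?_
  · -- pointwise convergence of each term
    have heq : ∀ γ : ℝ, poch (γ:ℂ) n * extBeta (ϑ + n) (υ - ϑ) p lam /
        (classicalBeta ϑ (υ - ϑ) * (n.factorial : ℂ)) * (z / (γ:ℂ)) ^ n / ((n:ℂ) + a) ^ σ
        = (poch (γ:ℂ) n * ((γ:ℂ))⁻¹ ^ n) * (extBeta (ϑ + n) (υ - ϑ) p lam /
          (classicalBeta ϑ (υ - ϑ) * (n.factorial : ℂ)) * z ^ n / ((n:ℂ) + a) ^ σ) := by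
      intro γ
      simp only [div_eq_mul_inv, mul_pow]
      ring
    have h5 := (poch_mul_inv_pow_tendsto n).mul_const (extBeta (ϑ + n) (υ - ϑ) p lam /
      (classicalBeta ϑ (υ - ϑ) * (n.factorial : ℂ)) * z ^ n / ((n:ℂ) + a) ^ σ)
    rw [one_mul] at h5
    exact Tendsto.congr (fun γ => (heq γ).symm) h5
  · -- uniform bound
    filter_upwards [eventually_ge_atTop (1:ℝ)] with γ hγ
    intro n
    have hγ0 : (0:ℝ) < γ := lt_of_lt_of_le one_pos hγ
    have hfactpos : (0:ℝ) < (n.factorial : ℝ) := by exact_mod_cast n.factorial_pos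
    have hnorm : ‖poch (γ:ℂ) n * extBeta (ϑ + n) (υ - ϑ) p lam /
        (classicalBeta ϑ (υ - ϑ) * (n.factorial : ℂ)) * (z / (γ:ℂ)) ^ n / ((n:ℂ) + a) ^ σ‖
        = (‖poch (γ:ℂ) n‖ * (‖z‖ / γ) ^ n) * (‖extBeta (ϑ + n) (υ - ϑ) p lam‖ /
          (‖classicalBeta ϑ (υ - ϑ)‖ * (n.factorial : ℝ))) * ‖((n:ℂ) + a) ^ σ‖⁻¹ := by
      simp only [div_eq_mul_inv, mul_inv, norm_mul, norm_pow, norm_inv, Complex.norm_natCast,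
        Complex.norm_real, Real.norm_eq_abs, abs_of_pos hγ0]
      ring
    rw [hnorm]
    have hQ : ‖extBeta (ϑ + n) (υ - ϑ) p lam‖ /
        (‖classicalBeta ϑ (υ - ϑ)‖ * (n.factorial : ℝ))
        ≤ M / (‖classicalBeta ϑ (υ - ϑ)‖ * (n.factorial : ℝ)) := by
      gcongr
      exact hM n
    have hP : ‖poch (γ:ℂ) n‖ * (‖z‖ / γ) ^ n ≤ (n.factorial : ℝ) * ‖z‖ ^ n := by
      calc ‖poch (γ:ℂ) n‖ * (‖z‖ / γ) ^ n ≤ (γ ^ n * (n.factorial : ℝ)) * (‖z‖ / γ) ^ n :=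
            mul_le_mul_of_nonneg_right (poch_norm_le hγ n) (by positivity)
        _ = (n.factorial : ℝ) * ‖z‖ ^ n := by
            rw [div_pow]
            field_simp
    have hMdiv : 0 ≤ M / (‖classicalBeta ϑ (υ - ϑ)‖ * (n.factorial : ℝ)) :=
      div_nonneg hM0 (by positivity)
    calc (‖poch (γ:ℂ) n‖ * (‖z‖ / γ) ^ n) * (‖extBeta (ϑ + n) (υ - ϑ) p lam‖ /
          (‖classicalBeta ϑ (υ - ϑ)‖ * (n.factorial : ℝ))) * ‖((n:ℂ) + a) ^ σ‖⁻¹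
        ≤ (((n.factorial : ℝ) * ‖z‖ ^ n) *
            (M / (‖classicalBeta ϑ (υ - ϑ)‖ * (n.factorial : ℝ)))) *
          ((Real.exp (Real.pi * |σ.im|) * δ ^ (-|σ.re|) *
            (1 + ‖a‖) ^ ⌈|σ.re|⌉₊) * ((n:ℝ) + 1) ^ ⌈|σ.re|⌉₊) := by
          refine mul_le_mul (mul_le_mul hP hQ (by positivity) (by positivity))
            (cpow_inv_bound σ hδ0 hδ1 hδ hwn n) (by positivity) ?_
          exact mul_nonneg (by positivity) hMdiv
      _ = (M / ‖classicalBeta ϑ (υ - ϑ)‖ * (Real.exp (Real.pi * |σ.im|) * δ ^ (-|σ.re|) *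
            (1 + ‖a‖) ^ ⌈|σ.re|⌉₊)) * (((n:ℝ) + 1) ^ ⌈|σ.re|⌉₊ * ‖z‖ ^ n) := by
          field_simp [hfactpos.ne', hBn.ne']
end

section
/- Let p ≥ 0 be real, λ > 0 real, γ, σ complex, a complex that is not a nonpositive integer, and ϑ, υ complex with Re(υ) > Re(ϑ) > 0. Then for every complex z with |z| < 1, the series ∑_{n=0}^∞ (γ)_n B(ϑ+n,υ−ϑ;p,λ)/(B(ϑ,υ−ϑ) n!) · z^n/(n+a)^σ defining the extended Hurwitz–Lerch zeta function Φ_{γ,ϑ;υ}(z,σ,a;p,λ) converges absolutely. -/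
open MeasureTheory Set Filter
open Topology

lemma extBeta_uniform_bound (p lam : ℝ) (ϑ υ : ℂ) :
    ∃ C : ℝ, 0 ≤ C ∧ ∀ n : ℕ, ‖extBeta (ϑ + n) (υ - ϑ) p lam‖ ≤ C := by
  set F : ℕ → ℝ → ℂ := fun n t =>
    (t : ℂ) ^ (ϑ + n - 1) * ((1 : ℂ) - (t : ℂ)) ^ (υ - ϑ - 1) *
      mittagLeffler lam (-(p : ℂ) / ((t : ℂ) * (1 - (t : ℂ)))) with hF
  have hFdef : ∀ n : ℕ, extBeta (ϑ + n) (υ - ϑ) p lam = ∫ t in (0:ℝ)..1, F n t :=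
    fun n => rfl
  have hkey : ∀ N m : ℕ, N ≤ m → ∀ t ∈ Set.Ioc (0:ℝ) 1,
      F m t = (t : ℂ) ^ (m - N) * F N t := by
    intro N m hNm t ht
    have ht0 : (t : ℂ) ≠ 0 := by
      exact_mod_cast ne_of_gt ht.1
    have hpow : (t : ℂ) ^ (ϑ + m - 1) = (t : ℂ) ^ (m - N) * (t : ℂ) ^ (ϑ + N - 1) := by
      rw [← Complex.cpow_natCast]
      rw [← Complex.cpow_add _ _ ht0]
      congr 1
      push_cast [Nat.cast_sub hNm]
      ring
    simp only [hF]
    rw [hpow]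
    ring
  classical
  by_cases hI : ∃ n : ℕ, IntervalIntegrable (F n) volume 0 1
  · set N := Nat.find hI with hNdef
    have hN : IntervalIntegrable (F N) volume 0 1 := Nat.find_spec hI
    refine ⟨|∫ t in (0:ℝ)..1, ‖F N t‖|, abs_nonneg _, fun n => ?_⟩
    rcases lt_or_ge n N with h | h
    · have hni : ¬ IntervalIntegrable (F n) volume 0 1 := Nat.find_min hI h
      rw [hFdef, intervalIntegral.integral_undef hni]
      simp
    · have hae : ∀ᵐ t ∂volume.restrict (Set.uIoc (0:ℝ) 1), ‖F n t‖ ≤ ‖F N t‖ := by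
        rw [uIoc_of_le (zero_le_one)]
        filter_upwards [ae_restrict_mem measurableSet_Ioc] with t ht
        rw [hkey N n h t ht, norm_mul]
        have h1 : ‖(t : ℂ) ^ (n - N)‖ ≤ 1 := by
          rw [norm_pow, Complex.norm_real, Real.norm_of_nonneg ht.1.le]
          exact pow_le_one₀ ht.1.le ht.2
        calc ‖(t : ℂ) ^ (n - N)‖ * ‖F N t‖ ≤ 1 * ‖F N t‖ := by
              gcongr
          _ = ‖F N t‖ := one_mul _
      rw [hFdef]
      exact intervalIntegral.norm_integral_le_abs_of_norm_le hae hN.norm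
  · push_neg at hI
    refine ⟨0, le_refl _, fun n => ?_⟩
    rw [hFdef, intervalIntegral.integral_undef (hI n)]
    simp

/-- norm of Pochhammer bounded by product. -/
lemma poch_norm_le_s14 (γ : ℂ) (n : ℕ) :
    ‖poch γ n‖ ≤ (∏ k ∈ Finset.range n, ((1 + ‖γ‖ + k) / (1 + k))) * (n.factorial : ℝ) := by
  induction n with
  | zero => simp [poch]
  | succ n ih =>
      have hstep : poch γ (n + 1) = poch γ n * (γ + n) := ascPochhammer_succ_eval n γ
      have hn1 : (0:ℝ) < 1 + n := by positivity
      have h1 : ‖γ + (n : ℂ)‖ ≤ 1 + ‖γ‖ + n := by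
        calc ‖γ + (n : ℂ)‖ ≤ ‖γ‖ + ‖(n : ℂ)‖ := norm_add_le _ _
          _ = ‖γ‖ + n := by rw [Complex.norm_natCast]
          _ ≤ 1 + ‖γ‖ + n := by linarith
      have hP : (0:ℝ) ≤ ∏ k ∈ Finset.range n, ((1 + ‖γ‖ + k) / (1 + k)) := by
        apply Finset.prod_nonneg; intro k _; positivity
      calc ‖poch γ (n + 1)‖ = ‖poch γ n‖ * ‖γ + (n : ℂ)‖ := by rw [hstep, norm_mul]
        _ ≤ ((∏ k ∈ Finset.range n, ((1 + ‖γ‖ + k) / (1 + k))) * (n.factorial : ℝ))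
            * (1 + ‖γ‖ + n) := by
              exact mul_le_mul ih h1 (norm_nonneg _) (by positivity)
        _ = (∏ k ∈ Finset.range (n+1), ((1 + ‖γ‖ + k) / (1 + k))) * ((n+1).factorial : ℝ) := by
              rw [Finset.prod_range_succ, Nat.factorial_succ]
              push_cast
              field_simp
              ring

set_option maxHeartbeats 1000000 in
/-- absolute convergence of the series defining the extended
Hurwitz–Lerch zeta function. -/
theorem extHLZeta_summable (p lam : ℝ) (γ σ a ϑ υ : ℂ)
    (hp : 0 ≤ p) (hlam : 0 < lam) (ha : ∀ m : ℕ, a ≠ -(m : ℂ))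
    (hϑ : 0 < ϑ.re) (hυϑ : ϑ.re < υ.re) :
    ∀ z : ℂ, ‖z‖ < 1 →
      Summable (fun n : ℕ =>
        ‖poch γ n * extBeta (ϑ + n) (υ - ϑ) p lam /
          (classicalBeta ϑ (υ - ϑ) * (n.factorial : ℂ)) * z ^ n /
          ((n : ℂ) + a) ^ σ‖) := by
  intro z hz
  by_cases hB : classicalBeta ϑ (υ - ϑ) = 0
  · have : (fun n : ℕ =>
        ‖poch γ n * extBeta (ϑ + n) (υ - ϑ) p lam /
          (classicalBeta ϑ (υ - ϑ) * (n.factorial : ℂ)) * z ^ n /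
          ((n : ℂ) + a) ^ σ‖) = fun _ => (0:ℝ) := by
      funext n; rw [hB]; simp
    rw [this]; exact summable_zero
  by_cases hz0 : z = 0
  · apply summable_of_ne_finset_zero (s := {0})
    intro n hn
    have : z ^ n = 0 := by
      rw [hz0]; exact zero_pow (by simpa using hn)
    rw [this]; simp
  -- main case
  obtain ⟨C, hC0, hC⟩ := extBeta_uniform_bound p lam ϑ υ
  set c : ℝ := ‖γ‖ with hc
  set K : ℕ := ⌈|σ.re|⌉₊ with hK
  set N1 : ℕ := ⌈‖a‖⌉₊ + 1 with hN1
  set P : ℕ → ℝ := fun n => ∏ k ∈ Finset.range n, ((1 + c + k) / (1 + k)) with hP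
  set g : ℕ → ℝ := fun n => P n * ‖z‖ ^ n * ((n : ℝ) + 2) ^ K with hg
  have hzpos : 0 < ‖z‖ := norm_pos_iff.mpr hz0
  have hPpos : ∀ n, 0 < P n := by
    intro n; apply Finset.prod_pos; intro k _; positivity
  have hgpos : ∀ n, 0 < g n := by
    intro n; simp only [hg]; positivity
  -- summability of g by ratio test
  have hzn : ‖z‖ < 1 := by exact hz
  have hgsum : Summable g := by
    apply summable_of_ratio_test_tendsto_lt_one hzn
      (Eventually.of_forall fun n => (hgpos n).ne')
    have hratio : ∀ n : ℕ, ‖g (n + 1)‖ / ‖g n‖ =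
        ((1 + c + (n:ℝ)) / (1 + (n:ℝ))) * ‖z‖ * (((n:ℝ) + 3) / ((n:ℝ) + 2)) ^ K := by
      intro n
      rw [Real.norm_of_nonneg (hgpos (n+1)).le, Real.norm_of_nonneg (hgpos n).le]
      rw [div_eq_iff (hgpos n).ne']
      simp only [hg, hP, Finset.prod_range_succ]
      have h1 : (1:ℝ) + (n:ℝ) ≠ 0 := by positivity
      have h2 : ((n:ℝ) + 2) ≠ 0 := by positivity
      rw [pow_succ, div_pow]
      push_cast
      field_simp
      ring
    have h0 : Tendsto (fun n : ℕ => 1 / ((n : ℝ) + 1)) atTop (𝓝 0) :=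
      tendsto_one_div_add_atTop_nhds_zero_nat
    have h02 : Tendsto (fun n : ℕ => 1 / ((n : ℝ) + 2)) atTop (𝓝 0) := by
      have h := h0.comp (tendsto_add_atTop_nat 1)
      have heq : (fun n : ℕ => 1 / ((n : ℝ) + 2)) =
          (fun n : ℕ => 1 / ((n:ℝ) + 1)) ∘ (fun n : ℕ => n + 1) := by
        funext n
        simp only [Function.comp_apply]
        push_cast
        ring
      rw [heq]
      exact h
    have t1 : Tendsto (fun n : ℕ => (1 + c + (n:ℝ)) / (1 + (n:ℝ))) atTop (𝓝 1) := by
      have h := (h0.const_mul c).const_add 1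
      have heq : (fun n : ℕ => (1 + c + (n:ℝ)) / (1 + (n:ℝ))) =
          (fun n : ℕ => 1 + c * (1 / ((n:ℝ) + 1))) := by
        funext n
        have h1 : (1:ℝ) + (n:ℝ) ≠ 0 := by positivity
        field_simp
        ring
      rw [heq]
      simpa using h
    have t2 : Tendsto (fun n : ℕ => (((n:ℝ) + 3) / ((n:ℝ) + 2)) ^ K) atTop (𝓝 1) := by
      have h := (h02.const_add 1).pow K
      have heq : (fun n : ℕ => (((n:ℝ) + 3) / ((n:ℝ) + 2)) ^ K) =
          (fun n : ℕ => (1 + 1 / ((n:ℝ) + 2)) ^ K) := by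
        funext n
        have h2 : ((n:ℝ) + 2) ≠ 0 := by positivity
        field_simp
        ring_nf
      rw [heq]
      simpa using h
    have hmul := (t1.mul (tendsto_const_nhds (x := ‖z‖))).mul t2
    simp only [one_mul, mul_one] at hmul
    exact Tendsto.congr (fun n => (hratio n).symm) hmul
  set D : ℝ := C / ‖classicalBeta ϑ (υ - ϑ)‖ * (Real.exp (Real.pi * |σ.im|) * 2 ^ K) with hD
  have hDg : Summable (fun n => D * g n) := hgsum.mul_left D
  -- comparison
  have hcomp : ∀ m : ℕ, N1 ≤ m →
      ‖poch γ m * extBeta (ϑ + m) (υ - ϑ) p lam /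
        (classicalBeta ϑ (υ - ϑ) * (m.factorial : ℂ)) * z ^ m /
        ((m : ℂ) + a) ^ σ‖ ≤ D * g m := by
    intro m hm
    have hne : ((m : ℂ) + a) ≠ 0 := by
      intro h
      exact ha m (by rw [add_comm] at h; exact eq_neg_of_add_eq_zero_left h)
    have ham : ‖a‖ + 1 ≤ (m : ℝ) := by
      have h1 : ‖a‖ ≤ (⌈‖a‖⌉₊ : ℝ) := Nat.le_ceil _
      have h2 : ((N1 : ℕ) : ℝ) ≤ (m : ℝ) := by exact_mod_cast hm
      rw [hN1] at h2; push_cast at h2; linarith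
    have hb1 : (1:ℝ) ≤ ‖(m : ℂ) + a‖ := by
      have : (m : ℝ) ≤ ‖(m : ℂ) + a‖ + ‖a‖ := by
        calc (m : ℝ) = ‖(m : ℂ)‖ := by rw [Complex.norm_natCast]
          _ = ‖((m : ℂ) + a) + (-a)‖ := by ring_nf
          _ ≤ ‖(m : ℂ) + a‖ + ‖-a‖ := norm_add_le _ _
          _ = ‖(m : ℂ) + a‖ + ‖a‖ := by rw [norm_neg]
      linarith
    have hb2 : ‖(m : ℂ) + a‖ ≤ 2 * ((m : ℝ) + 2) := by
      have : ‖(m : ℂ) + a‖ ≤ (m : ℝ) + ‖a‖ := by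
        calc ‖(m : ℂ) + a‖ = ‖(m : ℂ) + a‖ := rfl
          _ ≤ ‖(m : ℂ)‖ + ‖a‖ := norm_add_le _ _
          _ = (m : ℝ) + ‖a‖ := by rw [Complex.norm_natCast]
      linarith
    have hrpow : (‖(m : ℂ) + a‖) ^ (-σ.re) ≤ 2 ^ K * ((m : ℝ) + 2) ^ K := by
      calc (‖(m : ℂ) + a‖) ^ (-σ.re)
          ≤ (‖(m : ℂ) + a‖) ^ |σ.re| :=
            Real.rpow_le_rpow_of_exponent_le hb1 (neg_le_abs σ.re)
        _ ≤ (2 * ((m : ℝ) + 2)) ^ |σ.re| :=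
            Real.rpow_le_rpow (by positivity) hb2 (abs_nonneg _)
        _ ≤ (2 * ((m : ℝ) + 2)) ^ (K : ℝ) :=
            Real.rpow_le_rpow_of_exponent_le (by push_cast; linarith [Nat.cast_nonneg (α := ℝ) m]) (Nat.le_ceil _)
        _ = 2 ^ K * ((m : ℝ) + 2) ^ K := by
            rw [Real.rpow_natCast, mul_pow]
    have hexp : Real.exp (Complex.arg ((m : ℂ) + a) * σ.im) ≤ Real.exp (Real.pi * |σ.im|) := by
      apply Real.exp_le_exp.mpr
      calc Complex.arg ((m : ℂ) + a) * σ.im ≤ |Complex.arg ((m : ℂ) + a) * σ.im| := le_abs_self _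
        _ = |Complex.arg ((m : ℂ) + a)| * |σ.im| := abs_mul _ _
        _ ≤ Real.pi * |σ.im| := by
            gcongr
            exact Complex.abs_arg_le_pi _
    have hfac : ((m.factorial : ℝ)) ≠ 0 := by
      exact_mod_cast m.factorial_ne_zero
    have hBn : (0:ℝ) < ‖classicalBeta ϑ (υ - ϑ)‖ := norm_pos_iff.mpr hB
    have e1 : ‖poch γ m * extBeta (ϑ + m) (υ - ϑ) p lam /
        (classicalBeta ϑ (υ - ϑ) * (m.factorial : ℂ)) * z ^ m /
        ((m : ℂ) + a) ^ σ‖ =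
        ‖poch γ m‖ * ‖extBeta (ϑ + m) (υ - ϑ) p lam‖ /
          (‖classicalBeta ϑ (υ - ϑ)‖ * (m.factorial : ℝ)) * ‖z‖ ^ m *
          (Real.exp (Complex.arg ((m : ℂ) + a) * σ.im) *
            (‖(m : ℂ) + a‖) ^ (-σ.re)) := by
      simp only [norm_div, norm_mul, norm_pow, Complex.norm_natCast]
      rw [Complex.norm_cpow_of_ne_zero hne]
      rw [Real.rpow_neg (norm_nonneg _)]
      rw [div_div_eq_mul_div]
      ring
    rw [e1]
    calc ‖poch γ m‖ * ‖extBeta (ϑ + m) (υ - ϑ) p lam‖ /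
          (‖classicalBeta ϑ (υ - ϑ)‖ * (m.factorial : ℝ)) * ‖z‖ ^ m *
          (Real.exp (Complex.arg ((m : ℂ) + a) * σ.im) *
            (‖(m : ℂ) + a‖) ^ (-σ.re))
        ≤ (P m * (m.factorial : ℝ)) * C /
          (‖classicalBeta ϑ (υ - ϑ)‖ * (m.factorial : ℝ)) * ‖z‖ ^ m *
          (Real.exp (Real.pi * |σ.im|) * (2 ^ K * ((m : ℝ) + 2) ^ K)) := by
          gcongr
          · exact poch_norm_le_s14 γ m
          · exact hC m
      _ = D * g m := by
          have hcancel : (P m * (m.factorial : ℝ)) * C /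
              (‖classicalBeta ϑ (υ - ϑ)‖ * (m.factorial : ℝ)) =
              P m * C / ‖classicalBeta ϑ (υ - ϑ)‖ := by
            rw [show (P m * (m.factorial : ℝ)) * C
                = (m.factorial : ℝ) * (P m * C) by ring]
            rw [show ‖classicalBeta ϑ (υ - ϑ)‖ * (m.factorial : ℝ)
                = (m.factorial : ℝ) * ‖classicalBeta ϑ (υ - ϑ)‖ by ring]
            rw [mul_div_mul_left _ _ hfac]
          rw [hcancel, hD, hg]
          ring
  -- conclude
  refine (summable_nat_add_iff N1).mp ?_
  apply Summable.of_nonneg_of_le (fun n => norm_nonneg _)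
    (fun n => hcomp (n + N1) (Nat.le_add_left N1 n))
  exact (summable_nat_add_iff N1).mpr hDg
end
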